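/- arXiv:2009.02414 — 4 statements merged into one kernel-verified Lean document; each statement's English description precedes it below -/
import Mathlib

section
/- For θ, θ' in Δ^{n+1,u} with θ'_{n+1} < u, we have θ ≤_hr θ' (in Δ^{n+1,u}) if and only if θ'_1 ≤ θ_1 and (θ_2/v, …, θ_{n+1}/v) ≤_hr (θ'_2, …, θ'_{n+1}) in Δ^{n,u-θ'_1}, where v = (Σ_{k=2}^{n+1} θ_k)/(u - θ'_1). -/
private lemma aux_sum_Ici_succ {n : ℕ} (f : Fin (n+1) → ℝ) (i : Fin n) :
    ∑ k ∈ Finset.Ici i, f k.succ = ∑ k ∈ Finset.Ici i.succ, f k := by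
  rw [show Finset.Ici i.succ = (Finset.Ici i).image Fin.succ from ?_,
    Finset.sum_image (fun a _ b _ h => Fin.succ_injective n h)]
  ext k
  simp only [Finset.mem_image, Finset.mem_Ici]
  constructor
  · intro hk
    have hk0 : k ≠ 0 := by
      intro h; subst h; exact absurd hk (by simp [Fin.le_def])
    exact ⟨k.pred hk0, by
      rw [← Fin.succ_le_succ_iff, Fin.succ_pred]; exact hk, Fin.succ_pred _ _⟩
  · rintro ⟨a, ha, rfl⟩; exact Fin.succ_le_succ_iff.mpr ha

private lemma aux_sum_Ici_zero {n : ℕ} (f : Fin (n+1) → ℝ) :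
    ∑ k ∈ Finset.Ici (0 : Fin (n+1)), f k = ∑ k, f k := by
  apply Finset.sum_congr _ (fun _ _ => rfl)
  ext k; simp [Fin.zero_le]

/-- The hazard rate order on nonnegative vectors summing to `u`. -/
def hrLE {m : ℕ} (θ θ' : Fin m → ℝ) : Prop :=
  ∀ i j : Fin m, i ≤ j →
    (∑ k ∈ Finset.Ici j, θ k) * (∑ k ∈ Finset.Ici i, θ' k) ≤
    (∑ k ∈ Finset.Ici i, θ k) * (∑ k ∈ Finset.Ici j, θ' k)

/-- Dimension reduction for the hazard rate order: given the first coordinate,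
the order can be verified in one dimension less. -/
theorem hr_dimension_reduction (n : ℕ) (hn : 1 ≤ n) (u : ℝ) (hu : 0 < u)
    (θ θ' : Fin (n + 1) → ℝ)
    (hθ : (∀ i, 0 ≤ θ i) ∧ ∑ i, θ i = u)
    (hθ' : (∀ i, 0 ≤ θ' i) ∧ ∑ i, θ' i = u)
    (hlast : θ' (Fin.last n) < u) :
    hrLE θ θ' ↔
      θ' 0 ≤ θ 0 ∧
        hrLE (fun i : Fin n => θ i.succ / ((∑ k : Fin n, θ k.succ) / (u - θ' 0)))
             (fun i : Fin n => θ' i.succ) := by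
  obtain ⟨m, rfl⟩ : ∃ m, n = m + 1 := ⟨n - 1, by omega⟩
  obtain ⟨hθnn, hθsum⟩ := hθ
  obtain ⟨hθ'nn, hθ'sum⟩ := hθ'
  set A := ∑ k : Fin (m+1), θ k.succ with hAdef
  set B := u - θ' 0 with hBdef
  have hθ0A : θ 0 + A = u := by rw [← hθsum, Fin.sum_univ_succ]
  have hθ'0B : ∑ k : Fin (m+1), θ' k.succ = B := by
    have := Fin.sum_univ_succ θ'
    rw [hθ'sum] at this
    rw [hBdef]; linarith
  have hAnn : 0 ≤ A := Finset.sum_nonneg fun k _ => hθnn k.succ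
  have hBnn : 0 ≤ B := by rw [← hθ'0B]; exact Finset.sum_nonneg fun k _ => hθ'nn k.succ
  have hTnn : ∀ i : Fin (m+2), 0 ≤ ∑ k ∈ Finset.Ici i, θ k :=
    fun i => Finset.sum_nonneg fun k _ => hθnn k
  have hT'nn : ∀ i : Fin (m+2), 0 ≤ ∑ k ∈ Finset.Ici i, θ' k :=
    fun i => Finset.sum_nonneg fun k _ => hθ'nn k
  have hTle : ∀ k : Fin (m+1), ∑ j ∈ Finset.Ici k.succ, θ j ≤ A := by
    intro k
    rw [← aux_sum_Ici_succ]
    exact Finset.sum_le_sum_of_subset_of_nonneg (Finset.subset_univ _)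
      (fun j _ _ => hθnn j.succ)
  have hT'le : ∀ k : Fin (m+1), ∑ j ∈ Finset.Ici k.succ, θ' j ≤ B := by
    intro k
    rw [← aux_sum_Ici_succ, ← hθ'0B]
    exact Finset.sum_le_sum_of_subset_of_nonneg (Finset.subset_univ _)
      (fun j _ _ => hθ'nn j.succ)
  have hT1 : ∑ k ∈ Finset.Ici ((0 : Fin (m+1)).succ), θ k = A := by
    rw [← aux_sum_Ici_succ, aux_sum_Ici_zero]
  have hT'1 : ∑ k ∈ Finset.Ici ((0 : Fin (m+1)).succ), θ' k = B := by
    rw [← aux_sum_Ici_succ, aux_sum_Ici_zero, hθ'0B]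
  have hφsum : ∀ i : Fin (m+1),
      ∑ k ∈ Finset.Ici i, θ k.succ / (A / B) = (∑ k ∈ Finset.Ici i.succ, θ k) / (A / B) := by
    intro i; rw [← Finset.sum_div, aux_sum_Ici_succ]
  have hT0 : ∑ k ∈ Finset.Ici (0 : Fin (m+2)), θ k = u := by rw [aux_sum_Ici_zero, hθsum]
  have hT'0 : ∑ k ∈ Finset.Ici (0 : Fin (m+2)), θ' k = u := by rw [aux_sum_Ici_zero, hθ'sum]
  constructor
  · rintro h
    have h01 := h 0 ((0 : Fin (m+1)).succ) (Fin.zero_le _)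
    rw [hT0, hT'0, hT1, hT'1] at h01
    have hAB : A ≤ B := by nlinarith
    refine ⟨by rw [hBdef] at hAB; linarith, ?_⟩
    intro i j hij
    simp only []
    rw [hφsum i, hφsum j, aux_sum_Ici_succ θ' i, aux_sum_Ici_succ θ' j]
    have key := h i.succ j.succ (Fin.succ_le_succ_iff.mpr hij)
    rcases eq_or_lt_of_le hBnn with hB0 | hBpos
    · simp [← hB0, div_zero]
    rcases eq_or_lt_of_le hAnn with hA0 | hApos
    · simp [← hA0, zero_div, div_zero]
    have hc : 0 < A / B := div_pos hApos hBpos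
    rw [div_mul_eq_mul_div, div_mul_eq_mul_div]
    exact (div_le_div_iff_of_pos_right hc).mpr key
  · rintro ⟨h0, hred⟩ i j hij
    have hAB : A ≤ B := by rw [hBdef]; linarith
    rcases Fin.eq_zero_or_eq_succ i with rfl | ⟨k, rfl⟩
    · rw [hT0, hT'0]
      have hj : ∑ k ∈ Finset.Ici j, θ k ≤ ∑ k ∈ Finset.Ici j, θ' k := by
        rcases Fin.eq_zero_or_eq_succ j with rfl | ⟨l, rfl⟩
        · rw [hT0, hT'0]
        rcases eq_or_lt_of_le hBnn with hB0 | hBpos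
        · have hA0 : A = 0 := by nlinarith
          have h1 : ∑ k ∈ Finset.Ici l.succ, θ k = 0 :=
            le_antisymm (by linarith [hTle l]) (hTnn _)
          have h2 : ∑ k ∈ Finset.Ici l.succ, θ' k = 0 :=
            le_antisymm (by linarith [hT'le l]) (hT'nn _)
          rw [h1, h2]
        rcases eq_or_lt_of_le hAnn with hA0 | hApos
        · have h1 : ∑ k ∈ Finset.Ici l.succ, θ k = 0 :=
            le_antisymm (by linarith [hTle l]) (hTnn _)
          rw [h1]; exact hT'nn _
        have hr0 := hred 0 l (Fin.zero_le _)
        rw [hφsum 0, hφsum l, aux_sum_Ici_succ θ' 0, aux_sum_Ici_succ θ' l, hT1, hT'1] at hr0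
        have hA' : A ≠ 0 := ne_of_gt hApos
        have hB' : B ≠ 0 := ne_of_gt hBpos
        rw [div_div_eq_mul_div, div_div_eq_mul_div,
          mul_div_cancel_left₀ _ hA', div_mul_eq_mul_div, div_le_iff₀ hApos] at hr0
        nlinarith [hT'nn l.succ, hTnn l.succ, mul_pos hBpos hBpos,
          mul_nonneg (mul_nonneg hBnn (hT'nn l.succ)) (sub_nonneg.mpr hAB)]
      nlinarith [hT'nn j]
    · rcases Fin.eq_zero_or_eq_succ j with rfl | ⟨l, rfl⟩
      · exact absurd (Fin.le_zero_iff.mp hij) (Fin.succ_ne_zero k)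
      have hkl : k ≤ l := Fin.succ_le_succ_iff.mp hij
      rcases eq_or_lt_of_le hBnn with hB0 | hBpos
      · have hA0 : A = 0 := by nlinarith
        have h1 : ∑ j ∈ Finset.Ici k.succ, θ j = 0 :=
          le_antisymm (by linarith [hTle k]) (hTnn _)
        have h2 : ∑ j ∈ Finset.Ici l.succ, θ j = 0 :=
          le_antisymm (by linarith [hTle l]) (hTnn _)
        rw [h1, h2, zero_mul, zero_mul]
      rcases eq_or_lt_of_le hAnn with hA0 | hApos
      · have h1 : ∑ j ∈ Finset.Ici k.succ, θ j = 0 :=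
          le_antisymm (by linarith [hTle k]) (hTnn _)
        have h2 : ∑ j ∈ Finset.Ici l.succ, θ j = 0 :=
          le_antisymm (by linarith [hTle l]) (hTnn _)
        rw [h1, h2, zero_mul, zero_mul]
      have hc : 0 < A / B := div_pos hApos hBpos
      have hr := hred k l hkl
      rw [hφsum k, hφsum l, aux_sum_Ici_succ θ' k, aux_sum_Ici_succ θ' l] at hr
      have h2 := mul_le_mul_of_nonneg_right hr hc.le
      have e : ∀ x y : ℝ, x / (A / B) * y * (A / B) = x * y := fun x y => by
        rw [div_mul_eq_mul_div, div_mul_cancel₀ _ hc.ne']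
      rw [e, e] at h2
      exact h2
end

section
/- For n ≥ 1 and u > 0: ∫_0^u ∫_0^{u−θ_1} ⋯ ∫_0^{u−Σ_{i=1}^{n−1}θ_i} ∏_{i=1}^n θ_i/(Σ_{j=i}^n θ_j) dθ_n ⋯ dθ_1 = u^n/(n!)^2. -/
set_option maxHeartbeats 1000000
open MeasureTheory

lemma Ici_succ_map {n : ℕ} (i : Fin n) :
    Finset.Ici i.succ = (Finset.Ici i).map ⟨Fin.succ, Fin.succ_injective n⟩ := by
  ext j
  simp only [Finset.mem_Ici, Finset.mem_map, Function.Embedding.coeFn_mk]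
  constructor
  · intro hj
    rcases Fin.eq_succ_of_ne_zero (i := j) (fun h => Fin.succ_ne_zero i
      (le_antisymm (h ▸ hj) (Fin.zero_le _))) with ⟨k, rfl⟩
    exact ⟨k, Fin.succ_le_succ_iff.mp hj, rfl⟩
  · rintro ⟨k, hk, rfl⟩
    exact Fin.succ_le_succ_iff.mpr hk

lemma sum_perm_prod_div_eq_one :
    ∀ (n : ℕ) (x : Fin n → ℝ), (∀ i, 0 < x i) →
      ∑ σ : Equiv.Perm (Fin n), ∏ i, x (σ i) / ∑ j ∈ Finset.Ici i, x (σ j) = 1 := by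
  intro n
  induction n with
  | zero => intro x _; simp
  | succ n ih =>
    intro x hx
    have hS : (0:ℝ) < ∑ j, x j := Finset.sum_pos (fun j _ => hx j) ⟨0, Finset.mem_univ _⟩
    rw [← Equiv.Perm.decomposeFin.symm.sum_comp]
    rw [Fintype.sum_prod_type]
    have key : ∀ (p : Fin (n+1)) (e : Equiv.Perm (Fin n)),
        (∏ i, x (Equiv.Perm.decomposeFin.symm (p, e) i) /
          ∑ j ∈ Finset.Ici i, x (Equiv.Perm.decomposeFin.symm (p, e) j)) =
        (x p / ∑ j, x j) *
          ∏ i : Fin n, (fun k => x (Equiv.swap 0 p k.succ)) (e i) /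
            ∑ j ∈ Finset.Ici i, (fun k => x (Equiv.swap 0 p k.succ)) (e j) := by
      intro p e
      rw [Fin.prod_univ_succ]
      congr 1
      · rw [Equiv.Perm.decomposeFin_symm_apply_zero]
        congr 1
        have : Finset.Ici (0 : Fin (n+1)) = Finset.univ := by
          ext j; simp [Fin.zero_le]
        rw [this, Equiv.sum_comp (Equiv.Perm.decomposeFin.symm (p, e)) x]
      · refine Finset.prod_congr rfl fun i _ => ?_
        rw [Equiv.Perm.decomposeFin_symm_apply_succ]
        congr 1
        rw [Ici_succ_map, Finset.sum_map]
        refine Finset.sum_congr rfl fun j _ => ?_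
        simp only [Function.Embedding.coeFn_mk]
        rw [Equiv.Perm.decomposeFin_symm_apply_succ]
    calc ∑ p : Fin (n+1), ∑ e : Equiv.Perm (Fin n),
          ∏ i, x (Equiv.Perm.decomposeFin.symm (p, e) i) /
            ∑ j ∈ Finset.Ici i, x (Equiv.Perm.decomposeFin.symm (p, e) j)
        = ∑ p : Fin (n+1), (x p / ∑ j, x j) * 1 := by
          refine Finset.sum_congr rfl fun p _ => ?_
          rw [Finset.sum_congr rfl (fun e _ => key p e), ← Finset.mul_sum]
          congr 1
          exact ih (fun k => x (Equiv.swap 0 p k.succ)) (fun k => hx _)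
      _ = 1 := by
          simp only [mul_one]
          rw [← Finset.sum_div]
          exact div_self (ne_of_gt hS)

lemma isClosed_simplex (n : ℕ) (u : ℝ) :
    IsClosed {θ : Fin n → ℝ | (∀ i, 0 ≤ θ i) ∧ ∑ i, θ i ≤ u} := by
  have : {θ : Fin n → ℝ | (∀ i, 0 ≤ θ i) ∧ ∑ i, θ i ≤ u} =
      (⋂ i, {θ : Fin n → ℝ | 0 ≤ θ i}) ∩ {θ : Fin n → ℝ | ∑ i, θ i ≤ u} := by
    ext θ; simp [Set.mem_iInter]
  rw [this]
  exact (isClosed_iInter fun i => isClosed_le continuous_const (continuous_apply i)).inter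
    (isClosed_le (continuous_finset_sum _ fun i _ => continuous_apply i) continuous_const)

lemma volume_solid_simplex :
    ∀ (n : ℕ) (u : ℝ), 0 ≤ u →
      volume {θ : Fin n → ℝ | (∀ i, 0 ≤ θ i) ∧ ∑ i, θ i ≤ u} =
        ENNReal.ofReal (u ^ n / n.factorial) := by
  intro n
  induction n with
  | zero =>
    intro u hu
    have h1 : {θ : Fin 0 → ℝ | (∀ i, 0 ≤ θ i) ∧ ∑ i, θ i ≤ u} = Set.univ := by
      ext θ; simp [hu]
    rw [h1]
    simp [MeasureTheory.volume_pi, Measure.pi_univ]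
  | succ n ih =>
    intro u hu
    set e := MeasurableEquiv.piFinSuccAbove (fun _ : Fin (n+1) => ℝ) 0 with he
    have hmp := MeasureTheory.volume_preserving_piFinSuccAbove (fun _ : Fin (n+1) => ℝ) 0
    set B : Set (ℝ × (Fin n → ℝ)) :=
      {p | (0 ≤ p.1 ∧ p.1 ≤ u) ∧ (∀ i, 0 ≤ p.2 i) ∧ ∑ i, p.2 i ≤ u - p.1} with hB
    have hBclosed : IsClosed B := by
      have : B = ({p : ℝ × (Fin n → ℝ) | 0 ≤ p.1} ∩ {p | p.1 ≤ u}) ∩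
          ((⋂ i, {p : ℝ × (Fin n → ℝ) | 0 ≤ p.2 i}) ∩
            {p : ℝ × (Fin n → ℝ) | ∑ i, p.2 i ≤ u - p.1}) := by
        ext p; simp [hB, Set.mem_iInter, and_assoc]
      rw [this]
      refine ((isClosed_le continuous_const continuous_fst).inter
        (isClosed_le continuous_fst continuous_const)).inter
        (((isClosed_iInter fun i => isClosed_le continuous_const
          ((continuous_apply i).comp continuous_snd)).inter
          (isClosed_le (continuous_finset_sum _ fun i _ => (continuous_apply i).comp continuous_snd)
            ((continuous_const.sub continuous_fst)))))
    have hset : {θ : Fin (n+1) → ℝ | (∀ i, 0 ≤ θ i) ∧ ∑ i, θ i ≤ u} = e ⁻¹' B := by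
      ext θ
      have hesucc : ∀ j : Fin n, (e θ).2 j = θ j.succ := fun j => rfl
      have he0 : (e θ).1 = θ 0 := rfl
      simp only [Set.mem_preimage, Set.mem_setOf_eq, hB, he0, hesucc]
      constructor
      · rintro ⟨h1, h2⟩
        rw [Fin.sum_univ_succ] at h2
        have hnn : 0 ≤ ∑ i : Fin n, θ i.succ :=
          Finset.sum_nonneg fun i _ => h1 i.succ
        exact ⟨⟨h1 0, by linarith⟩, fun i => h1 i.succ, by linarith⟩
      · rintro ⟨⟨h0, h0u⟩, h1, h2⟩
        refine ⟨fun i => ?_, ?_⟩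
        · rcases Fin.eq_zero_or_eq_succ i with rfl | ⟨j, rfl⟩
          · exact h0
          · exact h1 j
        · rw [Fin.sum_univ_succ]; linarith
    rw [hset, hmp.measure_preimage hBclosed.measurableSet.nullMeasurableSet]
    rw [MeasureTheory.Measure.volume_eq_prod, Measure.prod_apply hBclosed.measurableSet]
    have hslice : ∀ t : ℝ, volume (Prod.mk t ⁻¹' B) =
        Set.indicator (Set.Icc 0 u)
          (fun t => ENNReal.ofReal ((u - t) ^ n / n.factorial)) t := by
      intro t
      by_cases ht : t ∈ Set.Icc 0 u
      · rw [Set.indicator_of_mem ht]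
        have : Prod.mk t ⁻¹' B =
            {y : Fin n → ℝ | (∀ i, 0 ≤ y i) ∧ ∑ i, y i ≤ u - t} := by
          ext y; simp [hB, ht.1, ht.2]
        rw [this, ih (u - t) (by linarith [ht.2])]
      · rw [Set.indicator_of_notMem ht]
        have : Prod.mk t ⁻¹' B = (∅ : Set (Fin n → ℝ)) := by
          ext y
          simp only [Set.mem_preimage, Set.mem_setOf_eq, hB, Set.mem_empty_iff_false,
            iff_false]
          rintro ⟨⟨h0, h0u⟩, -, -⟩
          exact ht ⟨h0, h0u⟩
        rw [this, measure_empty]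
    rw [lintegral_congr hslice, lintegral_indicator measurableSet_Icc]
    have hcont : ContinuousOn (fun t : ℝ => (u - t) ^ n / n.factorial) (Set.Icc 0 u) :=
      (((continuous_const.sub continuous_id).pow n).div_const _).continuousOn
    have hint : IntegrableOn (fun t : ℝ => (u - t) ^ n / n.factorial) (Set.Icc 0 u) :=
      hcont.integrableOn_Icc
    rw [← MeasureTheory.ofReal_integral_eq_lintegral_ofReal hint ?nonneg]
    case nonneg =>
      filter_upwards [ae_restrict_mem measurableSet_Icc] with t ht
      have : (0:ℝ) ≤ u - t := by linarith [ht.2]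
      positivity
    congr 1
    rw [MeasureTheory.integral_Icc_eq_integral_Ioc,
      ← intervalIntegral.integral_of_le hu]
    rw [intervalIntegral.integral_div]
    have := intervalIntegral.integral_comp_sub_left (a := (0:ℝ)) (b := u)
      (fun s => s ^ n) u
    rw [this]
    simp only [sub_zero, sub_self]
    rw [integral_pow]
    rw [Nat.factorial_succ]
    push_cast
    field_simp
    simp

/-- The integral of `∏_{i=1}^n θ_i/(Σ_{j=i}^n θ_j)` over the solid simplex
`{θ : θ_i ≥ 0, θ_1 + ⋯ + θ_n ≤ u}` equals `u^n/(n!)^2`. -/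
theorem integral_over_solid_simplex (n : ℕ) (hn : 1 ≤ n) (u : ℝ) (hu : 0 < u) :
    ∫ θ in {θ : Fin n → ℝ | (∀ i, 0 ≤ θ i) ∧ ∑ i, θ i ≤ u},
      ∏ i, θ i / (∑ j ∈ Finset.Ici i, θ j) =
    u ^ n / (Nat.factorial n : ℝ) ^ 2 := by
  set A := {θ : Fin n → ℝ | (∀ i, 0 ≤ θ i) ∧ ∑ i, θ i ≤ u} with hA
  have hAmeas : MeasurableSet A := (isClosed_simplex n u).measurableSet
  have hAvol : volume A = ENNReal.ofReal (u ^ n / n.factorial) :=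
    volume_solid_simplex n u hu.le
  have hAfin : volume A ≠ ⊤ := by rw [hAvol]; exact ENNReal.ofReal_ne_top
  set F : Equiv.Perm (Fin n) → (Fin n → ℝ) → ℝ :=
    fun σ θ => ∏ i, θ (σ i) / ∑ j ∈ Finset.Ici i, θ (σ j) with hF
  have hFmeas : ∀ σ, Measurable (F σ) := fun σ =>
    Finset.measurable_prod _ fun i _ =>
      (measurable_pi_apply _).div (Finset.measurable_sum _ fun j _ => measurable_pi_apply _)
  have hFbound : ∀ σ, ∀ θ ∈ A, ‖F σ θ‖ ≤ 1 := by
    intro σ θ hθ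
    have hθnn : ∀ i, 0 ≤ θ i := hθ.1
    have hfac : ∀ i : Fin n, θ (σ i) / ∑ j ∈ Finset.Ici i, θ (σ j) ∈ Set.Icc (0:ℝ) 1 := by
      intro i
      have hden : 0 ≤ ∑ j ∈ Finset.Ici i, θ (σ j) :=
        Finset.sum_nonneg fun j _ => hθnn _
      have hnum : θ (σ i) ≤ ∑ j ∈ Finset.Ici i, θ (σ j) :=
        Finset.single_le_sum (fun j _ => hθnn (σ j)) (Finset.mem_Ici.mpr le_rfl)
      exact ⟨div_nonneg (hθnn _) hden, div_le_one_of_le₀ hnum hden⟩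
    have h0 : 0 ≤ F σ θ := Finset.prod_nonneg fun i _ => (hfac i).1
    have h1 : F σ θ ≤ 1 :=
      Finset.prod_le_one (fun i _ => (hfac i).1) (fun i _ => (hfac i).2)
    rw [Real.norm_eq_abs, abs_of_nonneg h0]; exact h1
  have hInt : ∀ σ, IntegrableOn (F σ) A := by
    intro σ
    refine Measure.integrableOn_of_bounded (M := 1) hAfin (hFmeas σ).aestronglyMeasurable ?_
    filter_upwards [ae_restrict_mem hAmeas] with θ hθ
    exact hFbound σ θ hθ
  have hsym : ∀ σ : Equiv.Perm (Fin n), ∫ θ in A, F σ θ = ∫ θ in A, F 1 θ := by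
    intro σ
    set T := MeasurableEquiv.piCongrLeft (fun _ : Fin n => ℝ) (σ.symm : Fin n ≃ Fin n) with hT
    have hTapp : ∀ (θ : Fin n → ℝ) (i : Fin n), T θ i = θ (σ i) := by
      intro θ i
      simp [hT, MeasurableEquiv.piCongrLeft, Equiv.piCongrLeft]
    have hmp : MeasurePreserving T volume volume :=
      MeasureTheory.volume_measurePreserving_piCongrLeft (fun _ : Fin n => ℝ) _
    have hpre : T ⁻¹' A = A := by
      ext θ
      simp only [Set.mem_preimage, hA, Set.mem_setOf_eq]
      have h2 : ∑ i, T θ i = ∑ i, θ i := by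
        rw [Finset.sum_congr rfl fun i _ => hTapp θ i]
        exact Equiv.sum_comp σ θ
      rw [h2]
      constructor
      · rintro ⟨h1, h3⟩
        refine ⟨fun i => ?_, h3⟩
        have := h1 (σ.symm i)
        rwa [hTapp, Equiv.apply_symm_apply] at this
      · rintro ⟨h1, h3⟩
        exact ⟨fun i => by rw [hTapp]; exact h1 _, h3⟩
    have := hmp.setIntegral_preimage_emb T.measurableEmbedding (F 1) A
    rw [← this, hpre]
    refine setIntegral_congr_ae hAmeas ?_
    filter_upwards with θ _
    simp only [hF, Equiv.Perm.coe_one, id_eq]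
    refine Finset.prod_congr rfl fun i _ => ?_
    rw [hTapp]
    congr 1
    exact Finset.sum_congr rfl fun j _ => (hTapp θ j).symm
  have hone : ∫ θ in A, F 1 θ = (u ^ n / n.factorial / n.factorial : ℝ) := by
    have h0 : ∀ᵐ θ : Fin n → ℝ ∂volume, ∀ i, θ i ≠ 0 := by
      rw [ae_all_iff]
      intro i
      have := Measure.ae_eval_ne (fun _ : Fin n => (volume : Measure ℝ)) i 0
      rwa [← MeasureTheory.volume_pi] at this
    have hsum : ∑ σ : Equiv.Perm (Fin n), ∫ θ in A, F σ θ = (u ^ n / n.factorial : ℝ) := by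
      rw [← integral_finset_sum _ (fun σ _ => hInt σ)]
      have : ∫ θ in A, ∑ σ : Equiv.Perm (Fin n), F σ θ = ∫ θ in A, (1:ℝ) := by
        refine setIntegral_congr_ae hAmeas ?_
        filter_upwards [h0] with θ hθ hθA
        simpa [hF] using sum_perm_prod_div_eq_one n θ
          (fun i => lt_of_le_of_ne (hθA.1 i) (Ne.symm (hθ i)))
      rw [this, setIntegral_const, measureReal_def, hAvol, smul_eq_mul, mul_one,
        ENNReal.toReal_ofReal (by positivity)]
    have hcount : ∑ σ : Equiv.Perm (Fin n), ∫ θ in A, F σ θ =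
        (n.factorial : ℝ) * ∫ θ in A, F 1 θ := by
      rw [Finset.sum_congr rfl fun σ _ => hsym σ, Finset.sum_const, Finset.card_univ,
        Fintype.card_perm, Fintype.card_fin, nsmul_eq_mul]
    have hfac0 : (n.factorial : ℝ) ≠ 0 := Nat.cast_ne_zero.mpr n.factorial_ne_zero
    rw [hcount] at hsum
    rw [eq_div_iff hfac0]
    linarith
  have hgoal : (∫ θ in A, ∏ i, θ i / (∑ j ∈ Finset.Ici i, θ j)) = ∫ θ in A, F 1 θ := by
    refine setIntegral_congr_ae hAmeas ?_
    filter_upwards with θ _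
    simp [hF]
  rw [hgoal, hone, pow_two, ← div_div]
end

section
/- Let Θ and Θ' be independent random vectors, each uniformly distributed on Δ^{n,u}. Then P(Θ ≤_lr Θ') = 1/n!. -/
open MeasureTheory

/-- The likelihood ratio order. -/
def lrLE {m : ℕ} (θ θ' : Fin m → ℝ) : Prop :=
  ∀ i j : Fin m, i ≤ j → θ' i * θ j ≤ θ i * θ' j

namespace ProbLRAux

open Set Module Function
open scoped ENNReal NNReal

lemma cont_coord {n : ℕ} (i : Fin n) : Continuous fun x : EuclideanSpace ℝ (Fin n) => x i :=
  (continuous_apply i).comp (PiLp.continuous_ofLp 2 _)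

noncomputable def lfab {n : ℕ} (a b : ℝ) (i j : Fin n) : EuclideanSpace ℝ (Fin n) →ₗ[ℝ] ℝ where
  toFun x := a * x i - b * x j
  map_add' x y := by simp [PiLp.add_apply]; ring
  map_smul' c x := by simp [PiLp.smul_apply, smul_eq_mul]; ring

noncomputable def lfsum (n : ℕ) : EuclideanSpace ℝ (Fin n) →ₗ[ℝ] ℝ where
  toFun x := ∑ i, x i
  map_add' x y := by simp [PiLp.add_apply, Finset.sum_add_distrib]
  map_smul' c x := by simp [PiLp.smul_apply, smul_eq_mul, Finset.mul_sum]

lemma lfab_apply {n : ℕ} (a b : ℝ) (i j : Fin n) (x : EuclideanSpace ℝ (Fin n)) :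
    lfab a b i j x = a * x i - b * x j := rfl

lemma lfsum_apply {n : ℕ} (x : EuclideanSpace ℝ (Fin n)) : lfsum n x = ∑ i, x i := rfl

lemma lfsum_single {n : ℕ} (k : Fin n) (c : ℝ) :
    lfsum n (EuclideanSpace.single k c) = c := by
  rw [lfsum_apply]
  simp [EuclideanSpace.single_apply]

lemma lfab_single {n : ℕ} (a b : ℝ) (i j k : Fin n) (c : ℝ) :
    lfab a b i j (EuclideanSpace.single k c)
      = a * (if i = k then c else 0) - b * (if j = k then c else 0) := by
  rw [lfab_apply, EuclideanSpace.single_apply, EuclideanSpace.single_apply]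

lemma prod_surj {n : ℕ} (f g : EuclideanSpace ℝ (Fin n) →ₗ[ℝ] ℝ) (v w : EuclideanSpace ℝ (Fin n))
    (hfv : f v = 0) (hgv : g v ≠ 0) (hfw : f w = 1) :
    Function.Surjective (f.prod g) := by
  rintro ⟨s, t⟩
  refine ⟨s • w + ((t - s * g w) / g v) • v, ?_⟩
  simp only [LinearMap.prod_apply, Pi.prod, _root_.map_add, LinearMap.map_smul, hfv, hfw,
    Function.prod, smul_eq_mul, mul_zero, add_zero, mul_one, Prod.smul_mk, Prod.mk_add_mk, Prod.mk.injEq]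
  constructor
  · simp
  · field_simp
    ring

lemma null_affine {n : ℕ} (hn : 2 ≤ n) (f g : EuclideanSpace ℝ (Fin n) →ₗ[ℝ] ℝ)
    (hsurj : Function.Surjective (f.prod g)) (a b : ℝ) (A : Set (EuclideanSpace ℝ (Fin n)))
    (hA : ∀ x ∈ A, f x = a ∧ g x = b) :
    μH[(n : ℝ) - 1] A = 0 := by
  rcases A.eq_empty_or_nonempty with h | ⟨p, hp⟩
  · simp [h]
  set K := LinearMap.ker (f.prod g) with hK
  have hsub : A ⊆ (fun v => p + v) '' (K : Set (EuclideanSpace ℝ (Fin n))) := by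
    intro x hx
    refine ⟨x - p, ?_, by module⟩
    have h1 := hA x hx; have h2 := hA p hp
    have : (f.prod g) (x - p) = 0 := by
      simp [LinearMap.prod_apply, Pi.prod, map_sub, h1.1, h1.2, h2.1, h2.2, Prod.ext_iff]
    exact this
  have hd0 : (0:ℝ) ≤ (n : ℝ) - 1 := by
    have : (2:ℝ) ≤ n := by exact_mod_cast hn
    linarith
  refine le_antisymm ?_ zero_le
  calc μH[(n : ℝ) - 1] A ≤ μH[(n : ℝ) - 1] ((fun v => p + v) '' (K : Set _)) :=
        measure_mono hsub
    _ = μH[(n : ℝ) - 1] (K : Set (EuclideanSpace ℝ (Fin n))) :=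
        (isometry_add_left p).hausdorffMeasure_image (Or.inl hd0) _
    _ = 0 := by
        have hrange : finrank ℝ (LinearMap.range (f.prod g)) = 2 := by
          rw [LinearMap.range_eq_top.2 hsurj]
          simp [finrank_top]
        have hker : finrank ℝ K = n - 2 := by
          have h3 := LinearMap.finrank_range_add_finrank_ker (f.prod g)
          rw [finrank_euclideanSpace_fin, hrange, ← hK] at h3
          omega
        have hdim : dimH (K : Set (EuclideanSpace ℝ (Fin n))) = (n - 2 : ℕ) := by
          have h1 : (K : Set (EuclideanSpace ℝ (Fin n))) = Subtype.val '' (univ : Set K) := by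
            simp
          rw [h1, isometry_subtype_coe.dimH_image, Real.dimH_univ_eq_finrank, hker]
        have hcast : ((n : ℝ) - 1) = (((n - 1 : ℕ) : NNReal)) := by
          rw [NNReal.coe_natCast, Nat.cast_sub (by omega : 1 ≤ n), Nat.cast_one]
        rw [hcast]
        apply hausdorffMeasure_of_dimH_lt
        rw [hdim]
        exact_mod_cast (by omega : n - 2 < n - 1)

variable {m : ℕ} {u : ℝ}

noncomputable def Lpar (m : ℕ) : (Fin (m+1) → ℝ) →ₗ[ℝ] EuclideanSpace ℝ (Fin (m+2)) where
  toFun y := WithLp.toLp 2 (Fin.snoc y (- ∑ i, y i))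
  map_add' y z := by
    ext k
    induction k using Fin.lastCases with
    | last => simp [Fin.snoc_last, PiLp.add_apply, Finset.sum_add_distrib]; ring
    | cast i => simp [Fin.snoc_castSucc, PiLp.add_apply]
  map_smul' c y := by
    ext k
    induction k using Fin.lastCases with
    | last => simp [Fin.snoc_last, PiLp.smul_apply, smul_eq_mul, Finset.mul_sum]
    | cast i => simp [Fin.snoc_castSucc, PiLp.smul_apply]

noncomputable def p0 (m : ℕ) (u : ℝ) : EuclideanSpace ℝ (Fin (m+2)) :=
  WithLp.toLp 2 (Fin.snoc (0 : Fin (m+1) → ℝ) u)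

noncomputable def phi (m : ℕ) (u : ℝ) : (Fin (m+1) → ℝ) → EuclideanSpace ℝ (Fin (m+2)) :=
  fun y => p0 m u + Lpar m y

lemma phi_apply_castSucc (y : Fin (m+1) → ℝ) (i : Fin (m+1)) :
    phi m u y (Fin.castSucc i) = y i := by
  simp [phi, p0, Lpar, Fin.snoc_castSucc]

lemma phi_apply_last (y : Fin (m+1) → ℝ) :
    phi m u y (Fin.last (m+1)) = u - ∑ i, y i := by
  simp [phi, p0, Lpar, Fin.snoc_last]; ring

lemma phi_mem_S {y : Fin (m+1) → ℝ} (hy : (∀ i, 0 ≤ y i) ∧ ∑ i, y i ≤ u) :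
    (∀ i, 0 ≤ phi m u y i) ∧ ∑ i, phi m u y i = u := by
  constructor
  · intro k
    induction k using Fin.lastCases with
    | last => rw [phi_apply_last]; linarith [hy.2]
    | cast i => rw [phi_apply_castSucc]; exact hy.1 i
  · rw [Fin.sum_univ_castSucc]
    simp only [phi_apply_castSucc, phi_apply_last]
    ring

lemma S_eq_phi_image (hu : 0 < u) :
    {x : EuclideanSpace ℝ (Fin (m+2)) | (∀ i, 0 ≤ x i) ∧ ∑ i, x i = u}
      = phi m u '' {y | (∀ i, 0 ≤ y i) ∧ ∑ i, y i ≤ u} := by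
  ext x
  constructor
  · rintro ⟨hx0, hxs⟩
    refine ⟨fun i => x (Fin.castSucc i), ⟨fun i => hx0 _, ?_⟩, ?_⟩
    · rw [Fin.sum_univ_castSucc] at hxs
      have := hx0 (Fin.last (m+1))
      linarith
    · ext k
      induction k using Fin.lastCases with
      | last =>
        rw [phi_apply_last]
        rw [Fin.sum_univ_castSucc] at hxs
        linarith
      | cast i => rw [phi_apply_castSucc]
  · rintro ⟨y, hy, rfl⟩
    exact phi_mem_S hy

lemma hm_pi_eq : (μH[((m + 1 : ℕ) : ℝ)] : Measure (Fin (m+1) → ℝ)) = volume := by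
  have := MeasureTheory.hausdorffMeasure_pi_real (ι := Fin (m+1))
  simpa using this

lemma phi_lipschitz : ∃ K : ℝ≥0, LipschitzWith K (phi m u) := by
  set L := LinearMap.toContinuousLinearMap (Lpar m) with hL
  refine ⟨1 * ‖L‖₊, ?_⟩
  have h1 : phi m u = (fun v => p0 m u + v) ∘ L := rfl
  rw [h1]
  exact (isometry_add_left (p0 m u)).lipschitz.comp L.lipschitz

lemma S_lt_top (hu : 0 < u) :
    μH[((m + 1 : ℕ) : ℝ)] {x : EuclideanSpace ℝ (Fin (m+2)) | (∀ i, 0 ≤ x i) ∧ ∑ i, x i = u}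
      < ⊤ := by
  set d : ℝ := ((m + 1 : ℕ) : ℝ) with hd
  have hd0 : 0 ≤ d := by positivity
  obtain ⟨K, hlip⟩ := phi_lipschitz (m := m) (u := u)
  rw [S_eq_phi_image hu]
  have step1 := hlip.hausdorffMeasure_image_le hd0 {y | (∀ i, 0 ≤ y i) ∧ ∑ i, y i ≤ u}
  refine lt_of_le_of_lt step1 ?_
  apply ENNReal.mul_lt_top
  · exact ENNReal.rpow_lt_top_of_nonneg hd0 ENNReal.coe_ne_top
  · rw [hm_pi_eq]
    have hsub : {y : Fin (m+1) → ℝ | (∀ i, 0 ≤ y i) ∧ ∑ i, y i ≤ u}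
        ⊆ univ.pi fun _ => Icc (0:ℝ) u := by
      rintro y ⟨h0, hs⟩ i _
      refine ⟨h0 i, ?_⟩
      calc y i ≤ ∑ j, y j := Finset.single_le_sum (fun j _ => h0 j) (Finset.mem_univ i)
        _ ≤ u := hs
    refine lt_of_le_of_lt (measure_mono hsub) ?_
    rw [volume_pi_pi]
    refine ENNReal.prod_lt_top fun i _ => ?_
    simp [Real.volume_Icc]

noncomputable def projE (m : ℕ) : EuclideanSpace ℝ (Fin (m+2)) → (Fin (m+1) → ℝ) :=
  fun x i => x (Fin.castSucc i)

lemma projE_lipschitz : LipschitzWith 1 (projE m) := by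
  have h1 : LipschitzWith 1 (fun (y : Fin (m+2) → ℝ) (i : Fin (m+1)) => y (Fin.castSucc i)) := by
    apply LipschitzWith.mk_one
    intro x y
    rw [dist_pi_le_iff dist_nonneg]
    intro i
    exact dist_le_pi_dist x y (Fin.castSucc i)
  have h2 := h1.comp (PiLp.lipschitzWith_ofLp 2 (fun _ : Fin (m+2) => ℝ))
  rw [mul_one] at h2
  exact h2

lemma projE_phi (y : Fin (m+1) → ℝ) : projE m (phi m u y) = y := by
  funext i
  exact phi_apply_castSucc y i

lemma S_pos (hu : 0 < u) :
    0 < μH[((m + 1 : ℕ) : ℝ)]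
      {x : EuclideanSpace ℝ (Fin (m+2)) | (∀ i, 0 ≤ x i) ∧ ∑ i, x i = u} := by
  set d : ℝ := ((m + 1 : ℕ) : ℝ) with hd
  have hd0 : 0 ≤ d := by positivity
  set S : Set (EuclideanSpace ℝ (Fin (m+2))) := {x | (∀ i, 0 ≤ x i) ∧ ∑ i, x i = u} with hS
  have key := (projE_lipschitz (m := m)).hausdorffMeasure_image_le hd0 S
  have hbox : (univ.pi fun _ : Fin (m+1) => Ioo (0:ℝ) (u / (m+2))) ⊆ projE m '' S := by
    intro y hy
    have hy' : ∀ i, 0 < y i ∧ y i < u / (m+2) := fun i => hy i (mem_univ i)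
    have hsum : ∑ i, y i ≤ u := by
      have h1 : ∑ i, y i ≤ ∑ _i : Fin (m+1), (u / (m+2)) :=
        Finset.sum_le_sum fun i _ => (hy' i).2.le
      rw [Finset.sum_const, Finset.card_univ, Fintype.card_fin, nsmul_eq_mul] at h1
      have h2 : ((m+1 : ℕ) : ℝ) * (u / (m+2)) ≤ u := by
        rw [div_eq_mul_inv]
        have hm2 : (0:ℝ) < (m+2 : ℝ) := by positivity
        rw [mul_comm u, ← mul_assoc]
        have : ((m+1:ℕ):ℝ) * ((m+2:ℝ))⁻¹ ≤ 1 := by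
          rw [mul_inv_le_iff₀ hm2, one_mul]
          push_cast; linarith
        nlinarith [hu.le]
      linarith
    refine ⟨phi m u y, phi_mem_S ⟨fun i => (hy' i).1.le, hsum⟩, projE_phi y⟩
  have hvol : (0:ℝ≥0∞) < volume (univ.pi fun _ : Fin (m+1) => Ioo (0:ℝ) (u / (m+2))) := by
    rw [volume_pi_pi]
    refine CanonicallyOrderedAdd.prod_pos.2 fun i _ => ?_
    simp only [Real.volume_Ioo, sub_zero]
    exact ENNReal.ofReal_pos.2 (by positivity)
  rw [hm_pi_eq, ENNReal.coe_one, ENNReal.one_rpow, one_mul] at key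
  exact lt_of_lt_of_le (lt_of_lt_of_le hvol (measure_mono hbox)) key

noncomputable def Tperm {n : ℕ} (σ : Equiv.Perm (Fin n)) :
    EuclideanSpace ℝ (Fin n) ≃ₗᵢ[ℝ] EuclideanSpace ℝ (Fin n) :=
  LinearIsometryEquiv.piLpCongrLeft 2 ℝ ℝ σ.symm

lemma Tperm_apply {n : ℕ} (σ : Equiv.Perm (Fin n)) (x : EuclideanSpace ℝ (Fin n)) (i : Fin n) :
    Tperm σ x i = x (σ i) := by
  simp [Tperm, LinearIsometryEquiv.piLpCongrLeft_apply, Equiv.piCongrLeft'_apply]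

lemma Tperm_mp {n : ℕ} (hn : 2 ≤ n) (σ : Equiv.Perm (Fin n)) :
    MeasurePreserving (Tperm σ)
      (μH[(n:ℝ)-1] : Measure (EuclideanSpace ℝ (Fin n))) μH[(n:ℝ)-1] := by
  have hd0 : (0:ℝ) ≤ (n : ℝ) - 1 := by
    have : (2:ℝ) ≤ n := by exact_mod_cast hn
    linarith
  have hmeas : Measurable (Tperm σ) := (Tperm σ).continuous.measurable
  refine ⟨hmeas, ?_⟩
  ext A hA
  rw [Measure.map_apply hmeas hA]
  have h1 : (Tperm σ) ⁻¹' A = (Tperm σ).symm '' A := by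
    ext y
    constructor
    · intro h
      exact ⟨Tperm σ y, h, (Tperm σ).symm_apply_apply y⟩
    · rintro ⟨x, hx, rfl⟩
      show (Tperm σ) ((Tperm σ).symm x) ∈ A
      rw [(Tperm σ).apply_symm_apply]
      exact hx
  rw [h1, (Tperm σ).symm.isometry.hausdorffMeasure_image (Or.inl hd0)]

def EvS {n : ℕ} (σ : Equiv.Perm (Fin n)) :
    Set (EuclideanSpace ℝ (Fin n) × EuclideanSpace ℝ (Fin n)) :=
  {p | ∀ i j : Fin n, i ≤ j → p.2 (σ i) * p.1 (σ j) ≤ p.1 (σ i) * p.2 (σ j)}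

def TieS {n : ℕ} (i j : Fin n) :
    Set (EuclideanSpace ℝ (Fin n) × EuclideanSpace ℝ (Fin n)) :=
  {p | p.2 i * p.1 j = p.1 i * p.2 j}

def GS (n : ℕ) : Set (EuclideanSpace ℝ (Fin n) × EuclideanSpace ℝ (Fin n)) :=
  {p | (∀ i, 0 < p.1 i) ∧ (∀ i, 0 < p.2 i)}

lemma EvS_meas {n : ℕ} (σ : Equiv.Perm (Fin n)) : MeasurableSet (EvS σ) := by
  have h1 : EvS σ = ⋂ i, ⋂ j, ⋂ (_ : i ≤ j),
      {p : EuclideanSpace ℝ (Fin n) × EuclideanSpace ℝ (Fin n) |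
        p.2 (σ i) * p.1 (σ j) ≤ p.1 (σ i) * p.2 (σ j)} := by
    ext p; simp [EvS]
  rw [h1]
  refine MeasurableSet.iInter fun i => MeasurableSet.iInter fun j => MeasurableSet.iInter fun _ => ?_
  exact measurableSet_le
    (((cont_coord (σ i)).comp continuous_snd).mul ((cont_coord (σ j)).comp continuous_fst)).measurable
    (((cont_coord (σ i)).comp continuous_fst).mul ((cont_coord (σ j)).comp continuous_snd)).measurable

lemma TieS_meas {n : ℕ} (i j : Fin n) : MeasurableSet (TieS i j) :=
  measurableSet_eq_fun
    (((cont_coord i).comp continuous_snd).mul ((cont_coord j).comp continuous_fst)).measurable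
    (((cont_coord i).comp continuous_fst).mul ((cont_coord j).comp continuous_snd)).measurable

lemma GS_meas (n : ℕ) : MeasurableSet (GS n) := by
  have h1 : GS n = (⋂ i, {p : EuclideanSpace ℝ (Fin n) × EuclideanSpace ℝ (Fin n) | 0 < p.1 i})
      ∩ ⋂ i, {p : EuclideanSpace ℝ (Fin n) × EuclideanSpace ℝ (Fin n) | 0 < p.2 i} := by
    ext p; simp [GS]
  rw [h1]
  refine MeasurableSet.inter ?_ ?_ <;>
    refine MeasurableSet.iInter fun i => ?_
  · exact measurableSet_lt measurable_const ((cont_coord i).comp continuous_fst).measurable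
  · exact measurableSet_lt measurable_const ((cont_coord i).comp continuous_snd).measurable

lemma mem_EvS_iff_monotone {n : ℕ} {p : EuclideanSpace ℝ (Fin n) × EuclideanSpace ℝ (Fin n)}
    (hp : p ∈ GS n) (σ : Equiv.Perm (Fin n)) :
    p ∈ EvS σ ↔ Monotone ((fun i => p.2 i / p.1 i) ∘ σ) := by
  constructor
  · intro h i j hij
    have h2 := h i j hij
    rw [Function.comp_apply, Function.comp_apply,
      div_le_div_iff₀ (hp.1 (σ i)) (hp.1 (σ j))]
    nlinarith [h2]
  · intro h i j hij
    have h2 := h hij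
    rw [Function.comp_apply, Function.comp_apply,
      div_le_div_iff₀ (hp.1 (σ i)) (hp.1 (σ j))] at h2
    nlinarith [h2]

lemma cover_EvS {n : ℕ} {p : EuclideanSpace ℝ (Fin n) × EuclideanSpace ℝ (Fin n)}
    (hp : p ∈ GS n) : ∃ σ, p ∈ EvS σ := by
  refine ⟨Tuple.sort fun i => p.2 i / p.1 i, ?_⟩
  rw [mem_EvS_iff_monotone hp]
  exact Tuple.monotone_sort _

lemma unique_EvS {n : ℕ} {p : EuclideanSpace ℝ (Fin n) × EuclideanSpace ℝ (Fin n)}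
    (hp : p ∈ GS n) (htie : ∀ i j, i ≠ j → p ∉ TieS i j) {σ τ : Equiv.Perm (Fin n)}
    (hσ : p ∈ EvS σ) (hτ : p ∈ EvS τ) : σ = τ := by
  set r : Fin n → ℝ := fun i => p.2 i / p.1 i with hr
  have hinj : Function.Injective r := by
    intro a b hab
    by_contra hne
    apply htie a b hne
    have h1 : p.2 a / p.1 a = p.2 b / p.1 b := hab
    rw [div_eq_div_iff (hp.1 a).ne' (hp.1 b).ne'] at h1
    show p.2 a * p.1 b = p.1 a * p.2 b
    linarith [h1]
  have h2 := Tuple.unique_monotone ((mem_EvS_iff_monotone hp σ).1 hσ)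
    ((mem_EvS_iff_monotone hp τ).1 hτ)
  exact Equiv.ext fun i => hinj (congrFun h2 i)

end ProbLRAux

/-- For `Θ, Θ'` independent and uniform on the simplex `Δ^{n,u}` (normalized
`(n-1)`-dimensional Hausdorff measure), `P(Θ ≤_lr Θ') = 1/n!`. -/
theorem prob_lr (n : ℕ) (hn : 2 ≤ n) (u : ℝ) (hu : 0 < u)
    (S : Set (EuclideanSpace ℝ (Fin n)))
    (hS : S = {x | (∀ i, 0 ≤ x i) ∧ ∑ i, x i = u})
    (μ : Measure (EuclideanSpace ℝ (Fin n)))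
    (hμ : μ = (μH[(n : ℝ) - 1] S)⁻¹ • (μH[(n : ℝ) - 1]).restrict S) :
    (μ.prod μ) {p | lrLE (fun j => p.1 j) (fun j => p.2 j)} =
      ((Nat.factorial n : ENNReal))⁻¹ := by
  classical
  obtain ⟨m, rfl⟩ : ∃ m, n = m + 2 := ⟨n - 2, by omega⟩
  subst hS
  set S : Set (EuclideanSpace ℝ (Fin (m+2))) := {x | (∀ i, 0 ≤ x i) ∧ ∑ i, x i = u} with hS
  have hd : ((m + 2 : ℕ) : ℝ) - 1 = ((m + 1 : ℕ) : ℝ) := by push_cast; ring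
  rw [hd] at hμ
  set c := μH[((m + 1 : ℕ) : ℝ)] S with hc
  have hc0 : c ≠ 0 := by rw [hc, hS]; exact (ProbLRAux.S_pos hu).ne'
  have hctop : c ≠ ⊤ := by rw [hc, hS]; exact (ProbLRAux.S_lt_top hu).ne
  have hSclosed : IsClosed S := by
    rw [hS]
    have h1 : {x : EuclideanSpace ℝ (Fin (m+2)) | (∀ i, 0 ≤ x i) ∧ ∑ i, x i = u}
        = (⋂ i, {x : EuclideanSpace ℝ (Fin (m+2)) | 0 ≤ x i})
          ∩ {x : EuclideanSpace ℝ (Fin (m+2)) | ∑ i, x i = u} := by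
      ext x; simp
    rw [h1]
    exact (isClosed_iInter fun i =>
        isClosed_le continuous_const (ProbLRAux.cont_coord i)).inter
      (isClosed_eq (continuous_finset_sum _ fun i _ => ProbLRAux.cont_coord i) continuous_const)
  have hSmeas : MeasurableSet S := hSclosed.measurableSet
  haveI hprob : IsProbabilityMeasure μ := by
    constructor
    rw [hμ, Measure.smul_apply, Measure.restrict_apply_univ, smul_eq_mul]
    exact ENNReal.inv_mul_cancel hc0 hctop
  have μnull : ∀ A : Set (EuclideanSpace ℝ (Fin (m+2))), MeasurableSet A →
      μH[((m + 1 : ℕ) : ℝ)] (A ∩ S) = 0 → μ A = 0 := by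
    intro A hAm h0
    rw [hμ, Measure.smul_apply, Measure.restrict_apply hAm, h0, smul_eq_mul, mul_zero]
  have faceμ : ∀ i : Fin (m+2), μ {x : EuclideanSpace ℝ (Fin (m+2)) | x i ≤ 0} = 0 := by
    intro i
    apply μnull _ (measurableSet_le (ProbLRAux.cont_coord i).measurable measurable_const)
    rw [← hd]
    obtain ⟨j', hj'⟩ := exists_ne i
    refine ProbLRAux.null_affine (by omega) (ProbLRAux.lfsum (m+2)) (ProbLRAux.lfab 1 0 i i)
      ?_ u 0 _ ?_
    · refine ProbLRAux.prod_surj _ _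
        (EuclideanSpace.single i 1 - EuclideanSpace.single j' 1) (EuclideanSpace.single i 1)
        ?_ ?_ ?_
      · rw [map_sub, ProbLRAux.lfsum_single, ProbLRAux.lfsum_single, sub_self]
      · rw [map_sub, ProbLRAux.lfab_single, ProbLRAux.lfab_single]
        simp [hj'.symm]
      · exact ProbLRAux.lfsum_single i 1
    · rintro x ⟨hx1, hx2⟩
      obtain ⟨hx0, hxs⟩ := hx2
      refine ⟨hxs, ?_⟩
      rw [ProbLRAux.lfab_apply]
      have := hx0 i
      have hxi : x i = 0 := le_antisymm hx1 this
      rw [hxi]; ring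
  have secμ : ∀ i j : Fin (m+2), i ≠ j →
      ∀ θ : EuclideanSpace ℝ (Fin (m+2)), θ ∈ S → 0 < θ i → 0 < θ j →
      μ {x : EuclideanSpace ℝ (Fin (m+2)) | x i * θ j = θ i * x j} = 0 := by
    intro i j hij θ hθ hi hj
    apply μnull _ (measurableSet_eq_fun
      ((ProbLRAux.cont_coord i).measurable.mul_const (θ j))
      (((ProbLRAux.cont_coord j).measurable).const_mul (θ i)))
    rw [← hd]
    refine ProbLRAux.null_affine (by omega) (ProbLRAux.lfsum (m+2))
      (ProbLRAux.lfab (θ j) (θ i) i j) ?_ u 0 _ ?_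
    · refine ProbLRAux.prod_surj _ _
        (EuclideanSpace.single i 1 - EuclideanSpace.single j 1) (EuclideanSpace.single i 1)
        ?_ ?_ ?_
      · rw [map_sub, ProbLRAux.lfsum_single, ProbLRAux.lfsum_single, sub_self]
      · rw [map_sub, ProbLRAux.lfab_single, ProbLRAux.lfab_single]
        simp only [if_pos rfl, if_neg hij, if_neg (Ne.symm hij)]
        intro hcon
        simp only [if_true] at hcon
        ring_nf at hcon
        nlinarith [hi, hj]
      · exact ProbLRAux.lfsum_single i 1
    · rintro x ⟨hx1, hx2⟩
      obtain ⟨hx0, hxs⟩ := hx2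
      refine ⟨hxs, ?_⟩
      rw [ProbLRAux.lfab_apply]
      have : x i * θ j = θ i * x j := hx1
      linarith
  haveI : SFinite μ := inferInstance
  set ν := μ.prod μ with hν
  haveI : IsProbabilityMeasure ν := by rw [hν]; infer_instance
  have fstNull : ∀ i : Fin (m+2), ν {p : EuclideanSpace ℝ (Fin (m+2)) × EuclideanSpace ℝ (Fin (m+2)) | p.1 i ≤ 0} = 0 := by
    intro i
    have h1 : {p : EuclideanSpace ℝ (Fin (m+2)) × EuclideanSpace ℝ (Fin (m+2)) | p.1 i ≤ 0}
        = {x : EuclideanSpace ℝ (Fin (m+2)) | x i ≤ 0} ×ˢ Set.univ := by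
      ext p; simp
    rw [hν, h1, Measure.prod_prod, faceμ i, zero_mul]
  have sndNull : ∀ i : Fin (m+2), ν {p : EuclideanSpace ℝ (Fin (m+2)) × EuclideanSpace ℝ (Fin (m+2)) | p.2 i ≤ 0} = 0 := by
    intro i
    have h1 : {p : EuclideanSpace ℝ (Fin (m+2)) × EuclideanSpace ℝ (Fin (m+2)) | p.2 i ≤ 0}
        = Set.univ ×ˢ {x : EuclideanSpace ℝ (Fin (m+2)) | x i ≤ 0} := by
      ext p; simp
    rw [hν, h1, Measure.prod_prod, faceμ i, mul_zero]
  have aeS : ∀ᵐ θ ∂μ, θ ∈ S := by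
    rw [MeasureTheory.ae_iff]
    refine μnull _ hSmeas.compl ?_
    have hemp : {a : EuclideanSpace ℝ (Fin (m+2)) | a ∉ S} ∩ S = ∅ := by
      ext a; simp only [Set.mem_inter_iff, Set.mem_setOf_eq, Set.mem_empty_iff_false, iff_false,
        not_and]
      exact fun h h2 => h h2
    rw [hemp, measure_empty]
  have aePos : ∀ i : Fin (m+2), ∀ᵐ θ ∂μ, 0 < θ i := by
    intro i
    rw [MeasureTheory.ae_iff]
    have h1 : {θ : EuclideanSpace ℝ (Fin (m+2)) | ¬ 0 < θ i}
        = {θ : EuclideanSpace ℝ (Fin (m+2)) | θ i ≤ 0} := by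
      ext θ; simp [not_lt]
    rw [h1]
    exact faceμ i
  have tieNull : ∀ i j : Fin (m+2), i ≠ j → ν (ProbLRAux.TieS i j) = 0 := by
    intro i j hij
    rw [hν, Measure.prod_apply (ProbLRAux.TieS_meas i j)]
    have hae : (fun θ => μ (Prod.mk θ ⁻¹' ProbLRAux.TieS i j)) =ᵐ[μ] (fun _ => 0) := by
      filter_upwards [aeS, aePos i, aePos j] with θ hθ hi hj
      have hsec : Prod.mk θ ⁻¹' ProbLRAux.TieS i j
          = {x : EuclideanSpace ℝ (Fin (m+2)) | x i * θ j = θ i * x j} := rfl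
      rw [hsec]
      exact secμ i j hij θ hθ hi hj
    rw [lintegral_congr_ae hae, lintegral_zero]
  set N : Set (EuclideanSpace ℝ (Fin (m+2)) × EuclideanSpace ℝ (Fin (m+2))) :=
    (ProbLRAux.GS (m+2))ᶜ ∪ ⋃ i, ⋃ j, ⋃ (_ : i ≠ j), ProbLRAux.TieS i j with hN
  have Nmeas : MeasurableSet N :=
    ((ProbLRAux.GS_meas (m+2)).compl).union
      (MeasurableSet.iUnion fun i => MeasurableSet.iUnion fun j =>
        MeasurableSet.iUnion fun _ => ProbLRAux.TieS_meas i j)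
  have GcNull : ν (ProbLRAux.GS (m+2))ᶜ = 0 := by
    have hsub : (ProbLRAux.GS (m+2))ᶜ ⊆
        (⋃ i, {p : EuclideanSpace ℝ (Fin (m+2)) × EuclideanSpace ℝ (Fin (m+2)) | p.1 i ≤ 0})
        ∪ ⋃ i, {p : EuclideanSpace ℝ (Fin (m+2)) × EuclideanSpace ℝ (Fin (m+2)) | p.2 i ≤ 0} := by
      intro p hp
      simp only [ProbLRAux.GS, Set.mem_compl_iff, Set.mem_setOf_eq, not_and_or, not_forall,
        not_lt] at hp
      rcases hp with ⟨i, hi⟩ | ⟨i, hi⟩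
      · exact Or.inl (Set.mem_iUnion.2 ⟨i, hi⟩)
      · exact Or.inr (Set.mem_iUnion.2 ⟨i, hi⟩)
    refine measure_mono_null hsub ?_
    refine measure_union_null ?_ ?_ <;> exact measure_iUnion_null (by intro i; first
      | exact fstNull i | exact sndNull i)
  have Nnull : ν N = 0 := by
    rw [hN]
    refine measure_union_null GcNull ?_
    refine measure_iUnion_null fun i => measure_iUnion_null fun j => measure_iUnion_null fun hij =>
      tieNull i j hij
  -- equality of event measures under permutations
  have Tpre : ∀ σ : Equiv.Perm (Fin (m+2)), ProbLRAux.Tperm σ ⁻¹' S = S := by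
    intro σ
    ext x
    simp only [Set.mem_preimage, hS, Set.mem_setOf_eq, ProbLRAux.Tperm_apply]
    constructor
    · rintro ⟨h0, hs⟩
      refine ⟨fun i => ?_, ?_⟩
      · have := h0 (σ.symm i); rwa [Equiv.apply_symm_apply] at this
      · rw [← Equiv.sum_comp σ (fun i => x i)]; exact hs
    · rintro ⟨h0, hs⟩
      exact ⟨fun i => h0 (σ i), by rw [Equiv.sum_comp σ (fun i => x i)]; exact hs⟩
  have Tmp : ∀ σ : Equiv.Perm (Fin (m+2)), MeasurePreserving (ProbLRAux.Tperm σ) μ μ := by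
    intro σ
    have hmeas : Measurable (ProbLRAux.Tperm σ) := (ProbLRAux.Tperm σ).continuous.measurable
    have tmap : Measure.map (ProbLRAux.Tperm σ)
        (μH[((m + 1 : ℕ) : ℝ)] : Measure (EuclideanSpace ℝ (Fin (m+2))))
        = μH[((m + 1 : ℕ) : ℝ)] := by
      rw [← hd]; exact (ProbLRAux.Tperm_mp (by omega) σ).map_eq
    refine ⟨hmeas, ?_⟩
    rw [hμ, Measure.map_smul]
    congr 1
    calc Measure.map (ProbLRAux.Tperm σ)
          ((μH[((m + 1 : ℕ) : ℝ)] : Measure (EuclideanSpace ℝ (Fin (m+2)))).restrict S)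
        = Measure.map (ProbLRAux.Tperm σ)
          ((μH[((m + 1 : ℕ) : ℝ)] : Measure (EuclideanSpace ℝ (Fin (m+2)))).restrict
            (ProbLRAux.Tperm σ ⁻¹' S)) := by rw [Tpre σ]
      _ = (Measure.map (ProbLRAux.Tperm σ)
            (μH[((m + 1 : ℕ) : ℝ)] : Measure (EuclideanSpace ℝ (Fin (m+2))))).restrict S :=
          (Measure.restrict_map hmeas hSmeas).symm
      _ = (μH[((m + 1 : ℕ) : ℝ)] : Measure (EuclideanSpace ℝ (Fin (m+2)))).restrict S := by
          rw [tmap]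
  have EvEq : ∀ σ : Equiv.Perm (Fin (m+2)), ν (ProbLRAux.EvS σ) = ν (ProbLRAux.EvS 1) := by
    intro σ
    have mp2 : MeasurePreserving
        (Prod.map (ProbLRAux.Tperm σ) (ProbLRAux.Tperm σ)) ν ν := (Tmp σ).prod (Tmp σ)
    have hpre : Prod.map (ProbLRAux.Tperm σ) (ProbLRAux.Tperm σ) ⁻¹' ProbLRAux.EvS 1
        = ProbLRAux.EvS σ := by
      ext p
      simp only [Set.mem_preimage, ProbLRAux.EvS, Set.mem_setOf_eq, Prod.map_fst, Prod.map_snd,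
        Equiv.Perm.coe_one, id_eq, ProbLRAux.Tperm_apply]
    rw [← hpre]
    exact mp2.measure_preimage (ProbLRAux.EvS_meas 1).nullMeasurableSet
  have target_eq : {p : EuclideanSpace ℝ (Fin (m+2)) × EuclideanSpace ℝ (Fin (m+2)) |
      lrLE (fun j => p.1 j) (fun j => p.2 j)} = ProbLRAux.EvS 1 := by
    ext p
    simp only [Set.mem_setOf_eq, lrLE, ProbLRAux.EvS, Equiv.Perm.coe_one, id_eq]
  have disj : Pairwise (Function.onFun Disjoint fun σ : Equiv.Perm (Fin (m+2)) =>
      ProbLRAux.EvS σ \ N) := by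
    intro σ τ hστ
    rw [Function.onFun, Set.disjoint_left]
    rintro p ⟨hpσ, hpN⟩ ⟨hpτ, _⟩
    have hpG : p ∈ ProbLRAux.GS (m+2) := by
      by_contra hG
      exact hpN (Or.inl hG)
    have htie : ∀ i j : Fin (m+2), i ≠ j → p ∉ ProbLRAux.TieS i j := by
      intro i j hij hmem
      exact hpN (Or.inr (Set.mem_iUnion.2 ⟨i, Set.mem_iUnion.2 ⟨j, Set.mem_iUnion.2 ⟨hij, hmem⟩⟩⟩))
    exact hστ (ProbLRAux.unique_EvS hpG htie hpσ hpτ)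
  have hUnion : ν (⋃ σ : Equiv.Perm (Fin (m+2)), ProbLRAux.EvS σ \ N)
      = ∑' σ : Equiv.Perm (Fin (m+2)), ν (ProbLRAux.EvS σ \ N) :=
    measure_iUnion disj fun σ => (ProbLRAux.EvS_meas σ).diff Nmeas
  have hcover : Set.univ \ N ⊆ ⋃ σ : Equiv.Perm (Fin (m+2)), ProbLRAux.EvS σ \ N := by
    rintro p ⟨-, hpN⟩
    have hpG : p ∈ ProbLRAux.GS (m+2) := by
      by_contra hG
      exact hpN (Or.inl hG)
    obtain ⟨σ, hσ⟩ := ProbLRAux.cover_EvS hpG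
    exact Set.mem_iUnion.2 ⟨σ, hσ, hpN⟩
  have hU1 : ν (⋃ σ : Equiv.Perm (Fin (m+2)), ProbLRAux.EvS σ \ N) = 1 := by
    refine le_antisymm ((measure_mono (Set.subset_univ _)).trans_eq measure_univ) ?_
    have h1 : ν (Set.univ \ N) = 1 := by
      rw [measure_diff_null Nnull, measure_univ]
    rw [← h1]
    exact measure_mono hcover
  have hsum : ∑' σ : Equiv.Perm (Fin (m+2)), ν (ProbLRAux.EvS σ \ N)
      = (Nat.factorial (m+2) : ENNReal) * ν (ProbLRAux.EvS 1) := by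
    have h1 : ∀ σ : Equiv.Perm (Fin (m+2)), ν (ProbLRAux.EvS σ \ N) = ν (ProbLRAux.EvS 1) := by
      intro σ
      rw [measure_diff_null Nnull, EvEq σ]
    rw [tsum_congr h1, tsum_fintype, Finset.sum_const, Finset.card_univ, Fintype.card_perm,
      Fintype.card_fin, nsmul_eq_mul]
  have hkey : (Nat.factorial (m+2) : ENNReal) * ν (ProbLRAux.EvS 1) = 1 := by
    rw [← hsum, ← hUnion, hU1]
  have hf0 : (Nat.factorial (m+2) : ENNReal) ≠ 0 :=
    Nat.cast_ne_zero.2 (Nat.factorial_ne_zero _)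
  have hft : (Nat.factorial (m+2) : ENNReal) ≠ ⊤ := ENNReal.natCast_ne_top _
  rw [target_eq]
  calc ν (ProbLRAux.EvS 1)
      = ((Nat.factorial (m+2) : ENNReal)⁻¹ * (Nat.factorial (m+2) : ENNReal)) * ν (ProbLRAux.EvS 1) := by
        rw [ENNReal.inv_mul_cancel hf0 hft, one_mul]
    _ = (Nat.factorial (m+2) : ENNReal)⁻¹ * ((Nat.factorial (m+2) : ENNReal) * ν (ProbLRAux.EvS 1)) := by
        rw [mul_assoc]
    _ = (Nat.factorial (m+2) : ENNReal)⁻¹ := by rw [hkey, mul_one]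
end

section
/- Let Θ and Θ' be independent random vectors, each uniformly distributed on Δ^{n,u}. Then P(Θ ≤_st Θ') = 1/n. -/
open MeasureTheory

/-- The usual stochastic order. -/
def stLE {m : ℕ} (θ θ' : Fin m → ℝ) : Prop :=
  ∀ k : Fin m, ∑ i ∈ Finset.Ici k, θ i ≤ ∑ i ∈ Finset.Ici k, θ' i

open MeasureTheory Set Module
open Fin.NatCast
open scoped ENNReal NNReal

noncomputable section

/-- Linear part of the parametrization of the simplex. -/
def Lmap (m : ℕ) : (Fin m → ℝ) →ₗ[ℝ] EuclideanSpace ℝ (Fin (m+1)) where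
  toFun y := WithLp.toLp 2 (Fin.snoc y (-(∑ j, y j)))
  map_add' y z := by
    ext i
    induction i using Fin.lastCases with
    | last => simp [Fin.snoc_last, Finset.sum_add_distrib]; ring
    | cast j => simp [Fin.snoc_castSucc]
  map_smul' c y := by
    ext i
    induction i using Fin.lastCases with
    | last => simp [Fin.snoc_last, Finset.mul_sum]
    | cast j => simp [Fin.snoc_castSucc]

/-- Projection, inverse to the parametrization. -/
def Pmap (m : ℕ) : EuclideanSpace ℝ (Fin (m+1)) →ₗ[ℝ] (Fin m → ℝ) where
  toFun x := fun j => x j.castSucc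
  map_add' x y := by funext j; simp
  map_smul' c x := by funext j; simp

def Tmap (m : ℕ) (u : ℝ) : (Fin m → ℝ) → EuclideanSpace ℝ (Fin (m+1)) :=
  fun y => Lmap m y + (EuclideanSpace.single (Fin.last m) u)

def Aset (m : ℕ) (u : ℝ) : Set (Fin m → ℝ) :=
  {y | (∀ j, 0 ≤ y j) ∧ ∑ j, y j ≤ u}

lemma Tmap_apply_castSucc (m : ℕ) (u : ℝ) (y : Fin m → ℝ) (j : Fin m) :
    Tmap m u y j.castSucc = y j := by
  simp [Tmap, Lmap, Fin.snoc_castSucc, EuclideanSpace.single_apply,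
    (Fin.castSucc_lt_last j).ne]

lemma Tmap_apply_last (m : ℕ) (u : ℝ) (y : Fin m → ℝ) :
    Tmap m u y (Fin.last m) = u - ∑ j, y j := by
  simp [Tmap, Lmap, Fin.snoc_last, EuclideanSpace.single_apply]; ring

lemma sum_Tmap (m : ℕ) (u : ℝ) (y : Fin m → ℝ) :
    ∑ i, Tmap m u y i = u := by
  rw [Fin.sum_univ_castSucc]
  simp [Tmap_apply_castSucc, Tmap_apply_last]

lemma Tmap_image (m : ℕ) (u : ℝ) :
    Tmap m u '' Aset m u = {x : EuclideanSpace ℝ (Fin (m+1)) | (∀ i, 0 ≤ x i) ∧ ∑ i, x i = u} := by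
  ext x
  constructor
  · rintro ⟨y, ⟨hy0, hyu⟩, rfl⟩
    refine ⟨fun i => ?_, sum_Tmap m u y⟩
    induction i using Fin.lastCases with
    | last => rw [Tmap_apply_last]; linarith
    | cast j => rw [Tmap_apply_castSucc]; exact hy0 j
  · rintro ⟨hx0, hxu⟩
    refine ⟨Pmap (m) x, ⟨fun j => hx0 _, ?_⟩, ?_⟩
    · have : ∑ j : Fin m, x j.castSucc + x (Fin.last m) = u := by
        rw [← Fin.sum_univ_castSucc]; exact hxu
      have h0 := hx0 (Fin.last m)
      simp only [Pmap, LinearMap.coe_mk, AddHom.coe_mk]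
      linarith
    · ext i
      induction i using Fin.lastCases with
      | last =>
        rw [Tmap_apply_last]
        have : ∑ j : Fin m, x j.castSucc + x (Fin.last m) = u := by
          rw [← Fin.sum_univ_castSucc]; exact hxu
        simp only [Pmap, LinearMap.coe_mk, AddHom.coe_mk]
        linarith
      | cast j => rw [Tmap_apply_castSucc]; rfl

lemma Pmap_image (m : ℕ) (u : ℝ) (hu : 0 < u) :
    Pmap m '' {x : EuclideanSpace ℝ (Fin (m+1)) | (∀ i, 0 ≤ x i) ∧ ∑ i, x i = u}
      = Aset m u := by
  rw [← Tmap_image m u]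
  ext y
  constructor
  · rintro ⟨x, ⟨z, hz, rfl⟩, rfl⟩
    have : Pmap m (Tmap m u z) = z := by
      funext j
      simp only [Pmap, LinearMap.coe_mk, AddHom.coe_mk]
      exact Tmap_apply_castSucc m u z j
    rwa [this]
  · intro hy
    refine ⟨Tmap m u y, ⟨y, hy, rfl⟩, ?_⟩
    funext j
    simp only [Pmap, LinearMap.coe_mk, AddHom.coe_mk]
    exact (Tmap_apply_castSucc m u y j)

lemma lipschitz_Tmap (m : ℕ) (u : ℝ) :
    LipschitzWith ‖(LinearMap.toContinuousLinearMap (Lmap m))‖₊ (Tmap m u) := by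
  set f := LinearMap.toContinuousLinearMap (Lmap m)
  refine LipschitzWith.of_dist_le_mul fun a b => ?_
  have : dist (Tmap m u a) (Tmap m u b) = dist (f a) (f b) := by
    simp only [Tmap, dist_add_right]
    rfl
  rw [this]
  exact f.lipschitz.dist_le_mul a b

lemma lipschitz_Pmap (m : ℕ) :
    LipschitzWith ‖(LinearMap.toContinuousLinearMap (Pmap m))‖₊
      ((Pmap m) : EuclideanSpace ℝ (Fin (m+1)) → (Fin m → ℝ)) :=
  (LinearMap.toContinuousLinearMap (Pmap m)).lipschitz

lemma volume_Aset_pos (m : ℕ) (u : ℝ) (hu : 0 < u) : 0 < volume (Aset m u) := by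
  have hsub : (Set.pi Set.univ fun _ : Fin m => Ioo 0 (u / (m+1))) ⊆ Aset m u := by
    intro y hy
    simp only [Set.mem_pi, Set.mem_univ, forall_true_left, mem_Ioo] at hy
    constructor
    · exact fun j => (hy j).1.le
    · calc ∑ j, y j ≤ ∑ _j : Fin m, u / (m+1) := by
            refine Finset.sum_le_sum fun j _ => (hy j).2.le
        _ = m * (u / (m+1)) := by rw [Finset.sum_const]; simp [mul_comm]
        _ ≤ u := by
            rw [div_eq_mul_inv]
            have h1 : (m : ℝ) * (u * ((m:ℝ)+1)⁻¹) = u * ((m:ℝ) * ((m:ℝ)+1)⁻¹) := by ring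
            rw [h1]
            nlinarith [mul_inv_cancel₀ (show ((m:ℝ)+1) ≠ 0 by positivity),
              inv_nonneg.mpr (show (0:ℝ) ≤ (m:ℝ)+1 by positivity)]
  calc (0 : ℝ≥0∞) < ∏ _j : Fin m, ENNReal.ofReal (u / (m+1) - 0) := by
        rw [Finset.prod_const]
        refine ENNReal.pow_pos ?_ _
        rw [ENNReal.ofReal_pos]
        have : (0:ℝ) < (m:ℝ)+1 := by positivity
        simp only [sub_zero]
        positivity
    _ = volume (Set.pi Set.univ fun _ : Fin m => Ioo 0 (u / (m+1))) := by
        rw [volume_pi_pi]; simp [Real.volume_Ioo]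
    _ ≤ volume (Aset m u) := measure_mono hsub

lemma volume_Aset_lt_top (m : ℕ) (u : ℝ) (hu : 0 < u) : volume (Aset m u) < ⊤ := by
  have hsub : Aset m u ⊆ Set.pi Set.univ fun _ : Fin m => Icc 0 u := by
    rintro y ⟨hy0, hyu⟩ j _
    exact ⟨hy0 j, le_trans (Finset.single_le_sum (fun i _ => hy0 i) (Finset.mem_univ j)) hyu⟩
  calc volume (Aset m u) ≤ volume (Set.pi Set.univ fun _ : Fin m => Icc 0 u) :=
        measure_mono hsub
    _ = ∏ _j : Fin m, ENNReal.ofReal (u - 0) := by rw [volume_pi_pi]; simp [Real.volume_Icc]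
    _ < ⊤ := by
        rw [Finset.prod_const]
        exact ENNReal.pow_lt_top ENNReal.ofReal_lt_top

-- Stage 3
def Sset (m : ℕ) (u : ℝ) : Set (EuclideanSpace ℝ (Fin (m+1))) :=
  {x | (∀ i, 0 ≤ x i) ∧ ∑ i, x i = u}

lemma cont_eval {N : ℕ} (i : Fin N) :
    Continuous fun x : EuclideanSpace ℝ (Fin N) => x i := PiLp.continuous_apply 2 _ i

lemma isClosed_Sset (m : ℕ) (u : ℝ) : IsClosed (Sset m u) := by
  have h1 : IsClosed {x : EuclideanSpace ℝ (Fin (m+1)) | ∀ i, 0 ≤ x i} := by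
    have : {x : EuclideanSpace ℝ (Fin (m+1)) | ∀ i, 0 ≤ x i}
        = ⋂ i, {x | 0 ≤ x i} := by ext x; simp
    rw [this]
    exact isClosed_iInter fun i => isClosed_le continuous_const (cont_eval i)
  have h2 : IsClosed {x : EuclideanSpace ℝ (Fin (m+1)) | ∑ i, x i = u} :=
    isClosed_eq (continuous_finset_sum _ fun i _ => cont_eval i) continuous_const
  exact h1.inter h2

lemma hausdorff_eq_volume_pi (m : ℕ) :
    (μH[(m:ℝ)] : Measure (Fin m → ℝ)) = volume := by
  simpa using (hausdorffMeasure_pi_real (ι := Fin m))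

lemma HS_ne_top (m : ℕ) (u : ℝ) (hu : 0 < u) : μH[(m:ℝ)] (Sset m u) ≠ ⊤ := by
  have him : Sset m u = Tmap m u '' Aset m u := (Tmap_image m u).symm
  have hle := (lipschitz_Tmap m u).hausdorffMeasure_image_le (d := (m:ℝ)) (by positivity) (Aset m u)
  rw [← him, hausdorff_eq_volume_pi] at hle
  intro htop
  rw [htop] at hle
  have := lt_of_le_of_lt hle
    (ENNReal.mul_lt_top (ENNReal.rpow_lt_top_of_nonneg (by positivity) ENNReal.coe_ne_top)
      (volume_Aset_lt_top m u hu))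
  exact (lt_irrefl _ this).elim

lemma HS_ne_zero (m : ℕ) (u : ℝ) (hu : 0 < u) : μH[(m:ℝ)] (Sset m u) ≠ 0 := by
  have him : Aset m u = Pmap m '' Sset m u := (Pmap_image m u hu).symm
  have hle := (lipschitz_Pmap m).hausdorffMeasure_image_le
    (d := (m:ℝ)) (by positivity) (Sset m u)
  rw [← him, hausdorff_eq_volume_pi] at hle
  intro h0
  rw [h0, mul_zero] at hle
  exact absurd (le_antisymm hle (zero_le)) (volume_Aset_pos m u hu).ne'

-- Stage 4: rotation
def Rot (m : ℕ) (c : Fin (m+1)) :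
    EuclideanSpace ℝ (Fin (m+1)) ≃ₗᵢ[ℝ] EuclideanSpace ℝ (Fin (m+1)) :=
  LinearIsometryEquiv.piLpCongrLeft 2 ℝ ℝ (Equiv.addRight c).symm

lemma Rot_apply (m : ℕ) (c : Fin (m+1)) (x : EuclideanSpace ℝ (Fin (m+1))) (i : Fin (m+1)) :
    Rot m c x i = x (i + c) := by
  simp [Rot, LinearIsometryEquiv.piLpCongrLeft_apply, Equiv.piCongrLeft']

lemma Rot_preimage (m : ℕ) (u : ℝ) (c : Fin (m+1)) :
    (Rot m c) ⁻¹' (Sset m u) = Sset m u := by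
  ext x
  simp only [Set.mem_preimage, Sset, Set.mem_setOf_eq]
  constructor
  · rintro ⟨h0, hs⟩
    constructor
    · intro i
      have := h0 (i - c)
      rwa [Rot_apply, sub_add_cancel] at this
    · rw [← hs]
      simp only [Rot_apply]
      simpa using (Equiv.sum_comp (Equiv.addRight c) x).symm
  · rintro ⟨h0, hs⟩
    constructor
    · intro i; rw [Rot_apply]; exact h0 _
    · rw [← hs]
      simp only [Rot_apply]
      simpa using (Equiv.sum_comp (Equiv.addRight c) x)

lemma rot_invariant (m : ℕ) (u : ℝ) (c : Fin (m+1)) (d : ℝ) :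
    Measure.map (Rot m c)
      ((μH[d] (Sset m u))⁻¹ • μH[d].restrict (Sset m u))
      = (μH[d] (Sset m u))⁻¹ • μH[d].restrict (Sset m u) := by
  have hmeas : Measurable (Rot m c) := (Rot m c).continuous.measurable
  have hSm : MeasurableSet (Sset m u) := (isClosed_Sset m u).measurableSet
  ext B hB
  rw [Measure.map_apply hmeas hB]
  simp only [Measure.smul_apply, smul_eq_mul,
    Measure.restrict_apply hB, Measure.restrict_apply (hmeas hB)]
  congr 1
  have : (Rot m c) ⁻¹' B ∩ Sset m u = (Rot m c) ⁻¹' (B ∩ Sset m u) := by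
    rw [Set.preimage_inter, Rot_preimage]
  rw [this]
  exact (Rot m c).toIsometryEquiv.hausdorffMeasure_preimage d _

-- Stage 5: null sections
def sumL (N : ℕ) : EuclideanSpace ℝ (Fin N) →ₗ[ℝ] ℝ where
  toFun z := ∑ i, z i
  map_add' x y := by simp [Finset.sum_add_distrib]
  map_smul' c x := by simp [Finset.mul_sum]

lemma sum_single (N : ℕ) (q : Fin N) (a : ℝ) :
    ∑ i, (EuclideanSpace.single q a) i = a := by
  simp [EuclideanSpace.single_apply]

section NullSection

variable (m : ℕ)

local notation "E'" => EuclideanSpace ℝ (Fin (m+1))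

lemma null_section (hm : 1 ≤ m) (u : ℝ)
    (ℓ : EuclideanSpace ℝ (Fin (m+1)) →ₗ[ℝ] ℝ) (i₀ i₁ : Fin (m+1))
    (h₀ : ℓ (EuclideanSpace.single i₀ 1) = 1) (h₁ : ℓ (EuclideanSpace.single i₁ 1) = 0)
    (t : ℝ) : μH[(m:ℝ)] ({z | ℓ z = t} ∩ Sset m u) = 0 := by
  by_cases hne : ({z : E' | ℓ z = t} ∩ Sset m u).Nonempty
  · obtain ⟨x₀, hx₀t, hx₀S⟩ := hne
    set Lp : E' →ₗ[ℝ] ℝ × ℝ := LinearMap.prod (sumL (m+1)) ℓ with hLp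
    have hsurj : Function.Surjective Lp := by
      rintro ⟨a, b⟩
      refine ⟨(a - b) • EuclideanSpace.single i₁ 1 + b • EuclideanSpace.single i₀ 1, ?_⟩
      have hsum : sumL (m+1) ((a - b) • EuclideanSpace.single i₁ 1
          + b • EuclideanSpace.single i₀ 1) = a := by
        rw [map_add, _root_.map_smul, _root_.map_smul]
        simp only [smul_eq_mul, sumL, LinearMap.coe_mk, AddHom.coe_mk]
        rw [sum_single, sum_single]; ring
      have hl : ℓ ((a - b) • EuclideanSpace.single i₁ 1
          + b • EuclideanSpace.single i₀ 1) = b := by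
        rw [map_add, _root_.map_smul, _root_.map_smul, h₀, h₁]; simp
      exact Prod.ext (by simpa [hLp] using hsum) (by simpa [hLp] using hl)
    set W := LinearMap.ker Lp with hW
    have hrank : finrank ℝ W = m - 1 := by
      rw [hW]
      have h1 := LinearMap.finrank_range_add_finrank_ker Lp
      rw [LinearMap.range_eq_top.mpr hsurj, finrank_top] at h1
      have h2 : finrank ℝ (ℝ × ℝ) = 2 := by
        simp [Module.finrank_prod]
      rw [h2, finrank_euclideanSpace_fin] at h1
      omega
    have hsub : {z : E' | ℓ z = t} ∩ Sset m u ⊆ (fun w => x₀ + w) '' (W : Set E') := by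
      rintro z ⟨hzt, hz0, hzs⟩
      have hmem : z - x₀ ∈ W := by
        rw [hW, LinearMap.mem_ker, map_sub]
        have e1 : Lp z = (u, t) := by
          refine Prod.ext ?_ ?_
          · simpa [hLp, sumL] using hzs
          · simpa [hLp] using hzt
        have e2 : Lp x₀ = (u, t) := by
          refine Prod.ext ?_ ?_
          · simpa [hLp, sumL] using hx₀S.2
          · simpa [hLp] using hx₀t
        rw [e1, e2, sub_self]
      refine ⟨z - x₀, hmem, ?_⟩
      ext i
      simp only [PiLp.add_apply, PiLp.sub_apply]
      ring
    have hWdim : dimH ((W : Set E')) = ((finrank ℝ W : ℕ) : ℝ≥0∞) := by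
      have hiso : Isometry (Subtype.val : W → E') := isometry_subtype_coe
      have h3 : dimH (Subtype.val '' (Set.univ : Set W)) = dimH (Set.univ : Set W) :=
        hiso.dimH_image Set.univ
      rw [Set.image_univ, Subtype.range_coe] at h3
      rw [h3, Real.dimH_univ_eq_finrank]
    have hdim : dimH ({z : E' | ℓ z = t} ∩ Sset m u) < ((m : ℝ≥0) : ℝ≥0∞) := by
      have htr : dimH ((fun w => x₀ + w) '' (W : Set E')) = dimH (W : Set E') := by
        have he : (fun w : E' => x₀ + w) = fun w => x₀ +ᵥ w := by funext w; simp
        rw [he]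
        exact ((AffineIsometryEquiv.constVAdd ℝ E' x₀).toIsometryEquiv.dimH_image _)
      calc dimH ({z : E' | ℓ z = t} ∩ Sset m u)
          ≤ dimH ((fun w => x₀ + w) '' (W : Set E')) := dimH_mono hsub
        _ = dimH (W : Set E') := htr
        _ = ((finrank ℝ W : ℕ) : ℝ≥0∞) := hWdim
        _ < ((m : ℝ≥0) : ℝ≥0∞) := by
            rw [hrank]
            have : ((m : ℝ≥0) : ℝ≥0∞) = ((m : ℕ) : ℝ≥0∞) := by simp
            rw [this]
            exact_mod_cast (by omega : m - 1 < m)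
    have hfin := hausdorffMeasure_of_dimH_lt hdim
    simpa using hfin
  · rw [Set.not_nonempty_iff_eq_empty] at hne
    rw [hne, measure_empty]

end NullSection

-- Stage 6: combinatorics of partial sums
section Events

variable (m : ℕ)

local notation "E'" => EuclideanSpace ℝ (Fin (m+1))

def Dfun (p : E' × E') : ℕ → ℝ :=
  fun k => p.1 ((k : Fin (m+1))) - p.2 ((k : Fin (m+1)))

def PNf (p : E' × E') (k : ℕ) : ℝ := ∑ i ∈ Finset.range k, Dfun m p i

def Aev (r : Fin (m+1)) : Set (E' × E') :=
  {p | ∀ j : Fin (m+1), PNf m p r.val ≤ PNf m p j.val}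

lemma cont_PNf (k : ℕ) : Continuous fun p : E' × E' => PNf m p k := by
  refine continuous_finset_sum _ fun i _ => Continuous.sub ?_ ?_
  · exact (cont_eval _).comp continuous_fst
  · exact (cont_eval _).comp continuous_snd

lemma measurableSet_Aev (r : Fin (m+1)) : MeasurableSet (Aev m r) := by
  have : Aev m r = ⋂ j : Fin (m+1), {p | PNf m p r.val ≤ PNf m p j.val} := by
    ext p; simp [Aev]
  rw [this]
  exact MeasurableSet.iInter fun j =>
    (isClosed_le (cont_PNf m r.val) (cont_PNf m j.val)).measurableSet

lemma PNf_zero (p : E' × E') : PNf m p 0 = 0 := by simp [PNf]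

lemma PNf_total (u : ℝ) (p : E' × E') (hp : p ∈ Sset m u ×ˢ Sset m u) :
    PNf m p (m+1) = 0 := by
  have h := Fin.sum_univ_eq_sum_range (fun k => Dfun m p k) (m+1)
  rw [PNf, ← h]
  have : ∀ i : Fin (m+1), Dfun m p i.val = p.1 i - p.2 i := by
    intro i; rw [Dfun, Fin.cast_val_eq_self]
  rw [Finset.sum_congr rfl fun i _ => this i, Finset.sum_sub_distrib,
    hp.1.2, hp.2.2, sub_self]

lemma PNf_period (u : ℝ) (p : E' × E') (hp : p ∈ Sset m u ×ˢ Sset m u) (k : ℕ) :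
    PNf m p (k + (m+1)) = PNf m p k := by
  induction k with
  | zero => rw [zero_add, PNf_total m u p hp, PNf_zero]
  | succ k ih =>
      have e1 : k + 1 + (m+1) = (k + (m+1)) + 1 := by omega
      have hL : PNf m p ((k+(m+1))+1) = PNf m p (k+(m+1)) + Dfun m p (k+(m+1)) := by
        rw [PNf, PNf, Finset.sum_range_succ]
      have hR : PNf m p (k+1) = PNf m p k + Dfun m p k := by
        rw [PNf, PNf, Finset.sum_range_succ]
      rw [e1, hL, hR, ih]
      congr 1
      rw [Dfun, Dfun]
      have : ((k + (m+1) : ℕ) : Fin (m+1)) = ((k : ℕ) : Fin (m+1)) := by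
        push_cast
        simp
      rw [this]

lemma PNf_mod (u : ℝ) (p : E' × E') (hp : p ∈ Sset m u ×ˢ Sset m u) (a : ℕ) :
    PNf m p a = PNf m p (a % (m+1)) := by
  induction a using Nat.strong_induction_on with
  | _ a ih =>
    by_cases ha : a < m+1
    · rw [Nat.mod_eq_of_lt ha]
    · push_neg at ha
      have e1 : a = (a - (m+1)) + (m+1) := by omega
      rw [Nat.mod_eq_sub_mod ha, ← ih (a - (m+1)) (by omega)]
      conv_lhs => rw [e1]
      exact PNf_period m u p hp _

lemma PNf_rot (c : Fin (m+1)) (p : E' × E') (j : ℕ) :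
    PNf m (Rot m c p.1, Rot m c p.2) j = PNf m p (c.val + j) - PNf m p c.val := by
  have key : PNf m p (c.val + j) = PNf m p c.val
      + ∑ i ∈ Finset.range j, Dfun m p (c.val + i) := by
    rw [PNf, Finset.sum_range_add, ← PNf]
  rw [key]
  have : ∀ i : ℕ, Dfun m (Rot m c p.1, Rot m c p.2) i = Dfun m p (c.val + i) := by
    intro i
    rw [Dfun, Dfun]
    simp only [Rot_apply]
    have : ((c.val + i : ℕ) : Fin (m+1)) = ((i : ℕ) : Fin (m+1)) + c := by
      push_cast
      exact add_comm _ _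
    rw [this]
  rw [PNf, Finset.sum_congr rfl fun i _ => this i]
  ring

lemma rot_event (u : ℝ) (c r : Fin (m+1)) (p : E' × E') (hp : p ∈ Sset m u ×ˢ Sset m u) :
    (Rot m c p.1, Rot m c p.2) ∈ Aev m r ↔ p ∈ Aev m (r + c) := by
  simp only [Aev, Set.mem_setOf_eq, PNf_rot, sub_le_sub_iff_right]
  have hval : ∀ a b : Fin (m+1), PNf m p ((a + b).val) = PNf m p (a.val + b.val) := by
    intro a b
    rw [Fin.val_add]
    exact (PNf_mod m u p hp _).symm
  constructor
  · intro h j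
    have h2 := h (j - c)
    have e1 : PNf m p (c.val + (j - c).val) = PNf m p j.val := by
      calc PNf m p (c.val + (j - c).val)
          = PNf m p ((c.val + (j - c).val) % (m+1)) := PNf_mod m u p hp _
        _ = PNf m p ((c + (j - c)).val) := by rw [Fin.val_add]
        _ = PNf m p j.val := by rw [show c + (j - c) = j from add_sub_cancel c j]
    have e2 : PNf m p (c.val + r.val) = PNf m p ((r + c).val) := by
      rw [hval, add_comm r.val c.val]
    rw [e1, e2] at h2
    exact h2
  · intro h j
    have h2 := h (c + j)
    have e1 : PNf m p ((c + j).val) = PNf m p (c.val + j.val) := hval c j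
    have e2 : PNf m p ((r + c).val) = PNf m p (c.val + r.val) := by
      rw [hval, add_comm r.val c.val]
    rw [e1, e2] at h2
    exact h2

lemma exists_min_Aev (p : E' × E') : ∃ r : Fin (m+1), p ∈ Aev m r := by
  obtain ⟨r, _, hr⟩ := Finset.exists_min_image Finset.univ (fun r : Fin (m+1) => PNf m p r.val)
    ⟨0, Finset.mem_univ 0⟩
  exact ⟨r, fun j => hr j (Finset.mem_univ j)⟩

def winL (a b : ℕ) : EuclideanSpace ℝ (Fin (m+1)) →ₗ[ℝ] ℝ where
  toFun z := ∑ i ∈ Finset.range b, z ((a + i : ℕ) : Fin (m+1))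
  map_add' x y := by simp [Finset.sum_add_distrib]
  map_smul' c x := by simp [Finset.mul_sum]

lemma winL_single_in (r s : Fin (m+1)) (hrs : r.val < s.val) :
    winL m r.val (s.val - r.val) (EuclideanSpace.single r 1) = 1 := by
  rw [winL]
  simp only [LinearMap.coe_mk, AddHom.coe_mk]
  rw [Finset.sum_eq_single_of_mem 0 (Finset.mem_range.mpr (by omega))]
  · rw [add_zero, Fin.cast_val_eq_self, EuclideanSpace.single_apply, if_pos rfl]
  · intro i hi hi0
    rw [EuclideanSpace.single_apply, if_neg]
    intro hc
    have hlt : r.val + i < m + 1 := by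
      have := Finset.mem_range.mp hi
      omega
    have := congrArg Fin.val hc
    rw [Fin.val_cast_of_lt hlt] at this
    omega

lemma winL_single_out (r s : Fin (m+1)) (hrs : r.val < s.val) :
    winL m r.val (s.val - r.val) (EuclideanSpace.single s 1) = 0 := by
  rw [winL]
  simp only [LinearMap.coe_mk, AddHom.coe_mk]
  refine Finset.sum_eq_zero fun i hi => ?_
  rw [EuclideanSpace.single_apply, if_neg]
  intro hc
  have hlt : r.val + i < m + 1 := by
    have := Finset.mem_range.mp hi
    omega
  have := congrArg Fin.val hc
  rw [Fin.val_cast_of_lt hlt] at this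
  have := Finset.mem_range.mp hi
  omega

lemma Aev_inter_subset (r s : Fin (m+1)) (hrs : r.val < s.val) :
    Aev m r ∩ Aev m s ⊆
      {p : E' × E' | winL m r.val (s.val - r.val) p.1 = winL m r.val (s.val - r.val) p.2} := by
  rintro p ⟨h1, h2⟩
  have e1 : PNf m p r.val = PNf m p s.val := le_antisymm (h1 s) (h2 r)
  have key : PNf m p (r.val + (s.val - r.val)) = PNf m p r.val
      + ∑ i ∈ Finset.range (s.val - r.val), Dfun m p (r.val + i) := by
    rw [PNf, Finset.sum_range_add, ← PNf]
  rw [show r.val + (s.val - r.val) = s.val by omega, ← e1] at key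
  have hzero : ∑ i ∈ Finset.range (s.val - r.val), Dfun m p (r.val + i) = 0 := by
    linarith
  have : ∑ i ∈ Finset.range (s.val - r.val), Dfun m p (r.val + i)
      = winL m r.val (s.val - r.val) p.1 - winL m r.val (s.val - r.val) p.2 := by
    rw [winL]
    simp only [LinearMap.coe_mk, AddHom.coe_mk]
    rw [← Finset.sum_sub_distrib]
    rfl
  rw [this] at hzero
  have := sub_eq_zero.mp hzero
  exact this

end Events

-- Stage 7: bridge and main theorem
section Bridge

variable (m : ℕ)

local notation "E'" => EuclideanSpace ℝ (Fin (m+1))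

lemma tail_eq (u : ℝ) (z : E') (hz : ∑ i, z i = u) (k : Fin (m+1)) :
    ∑ i ∈ Finset.Ici k, z i = u - ∑ i ∈ Finset.range k.val, z ((i : ℕ) : Fin (m+1)) := by
  have h1 : Finset.Ici k = Finset.univ \ Finset.Iio k := by
    ext i; simp [Finset.mem_sdiff, not_lt]
  rw [h1, Finset.sum_sdiff_eq_sub (Finset.subset_univ _), hz]
  congr 1
  rw [← Nat.Iio_eq_range, ← Fin.map_valEmbedding_Iio, Finset.sum_map]
  refine Finset.sum_congr rfl fun i _ => ?_
  exact congrArg z (Fin.cast_val_eq_self i).symm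

lemma PNf_split (p : E' × E') (k : ℕ) :
    PNf m p k = ∑ i ∈ Finset.range k, p.1 ((i : ℕ) : Fin (m+1))
      - ∑ i ∈ Finset.range k, p.2 ((i : ℕ) : Fin (m+1)) := by
  rw [PNf, ← Finset.sum_sub_distrib]
  rfl

lemma stLE_iff (u : ℝ) (p : E' × E') (hp : p ∈ Sset m u ×ˢ Sset m u) :
    stLE (fun j => p.1 j) (fun j => p.2 j) ↔ p ∈ Aev m 0 := by
  simp only [stLE, Aev, Set.mem_setOf_eq]
  constructor
  · intro h j
    have hk := h j
    rw [tail_eq m u p.1 hp.1.2 j, tail_eq m u p.2 hp.2.2 j] at hk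
    rw [Fin.val_zero, PNf_zero, PNf_split]
    linarith
  · intro h k
    have hk := h k
    rw [Fin.val_zero, PNf_zero, PNf_split] at hk
    rw [tail_eq m u p.1 hp.1.2 k, tail_eq m u p.2 hp.2.2 k]
    linarith

end Bridge

/-- For `Θ, Θ'` independent and uniform on the simplex `Δ^{n,u}` (normalized
`(n-1)`-dimensional Hausdorff measure), `P(Θ ≤_st Θ') = 1/n`. -/
theorem prob_st (n : ℕ) (hn : 2 ≤ n) (u : ℝ) (hu : 0 < u)
    (S : Set (EuclideanSpace ℝ (Fin n)))
    (hS : S = {x | (∀ i, 0 ≤ x i) ∧ ∑ i, x i = u})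
    (μ : Measure (EuclideanSpace ℝ (Fin n)))
    (hμ : μ = (μH[(n : ℝ) - 1] S)⁻¹ • (μH[(n : ℝ) - 1]).restrict S) :
    (μ.prod μ) {p | stLE (fun j => p.1 j) (fun j => p.2 j)} = ((n : ENNReal))⁻¹ := by
  obtain ⟨m, rfl⟩ : ∃ m, n = m + 1 := ⟨n - 1, by omega⟩
  have hm : 1 ≤ m := by omega
  subst hS
  have hexp : ((m+1 : ℕ) : ℝ) - 1 = (m : ℝ) := by push_cast; ring
  rw [hexp] at hμ
  rw [show {x : EuclideanSpace ℝ (Fin (m+1)) | (∀ i, 0 ≤ x i) ∧ ∑ i, x i = u}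
      = Sset m u from rfl] at hμ
  subst hμ
  set c0 := μH[(m:ℝ)] (Sset m u) with hc0def
  set ν : Measure (EuclideanSpace ℝ (Fin (m+1))) :=
    c0⁻¹ • (μH[(m:ℝ)]).restrict (Sset m u) with hν
  have hSm : MeasurableSet (Sset m u) := (isClosed_Sset m u).measurableSet
  have hc0 : c0 ≠ 0 := HS_ne_zero m u hu
  have hct : c0 ≠ ⊤ := HS_ne_top m u hu
  have hν_apply : ∀ B : Set (EuclideanSpace ℝ (Fin (m+1))), MeasurableSet B →
      ν B = c0⁻¹ * μH[(m:ℝ)] (B ∩ Sset m u) := by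
    intro B hB
    rw [hν, Measure.smul_apply, Measure.restrict_apply hB, smul_eq_mul]
  haveI : IsFiniteMeasure ν := by
    constructor
    rw [hν_apply _ MeasurableSet.univ, Set.univ_inter, ← hc0def,
      ENNReal.inv_mul_cancel hc0 hct]
    exact ENNReal.one_lt_top
  have hν_univ : ν Set.univ = 1 := by
    rw [hν_apply _ MeasurableSet.univ, Set.univ_inter, ← hc0def,
      ENNReal.inv_mul_cancel hc0 hct]
  have hcompl : ν (Sset m u)ᶜ = 0 := by
    rw [hν_apply _ hSm.compl, Set.compl_inter_self, measure_empty, mul_zero]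
  have hSS_null : (ν.prod ν) (Sset m u ×ˢ Sset m u)ᶜ = 0 := by
    have hsub : (Sset m u ×ˢ Sset m u)ᶜ ⊆
        ((Sset m u)ᶜ ×ˢ (Set.univ : Set (EuclideanSpace ℝ (Fin (m+1)))))
        ∪ ((Set.univ : Set (EuclideanSpace ℝ (Fin (m+1)))) ×ˢ (Sset m u)ᶜ) := by
      intro p hp
      rw [Set.mem_compl_iff, Set.mem_prod] at hp
      push_neg at hp
      by_cases h1 : p.1 ∈ Sset m u
      · exact Or.inr ⟨Set.mem_univ _, hp h1⟩
      · exact Or.inl ⟨h1, Set.mem_univ _⟩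
    refine le_antisymm (le_trans (measure_mono hsub)
      (le_trans (measure_union_le _ _) ?_)) (zero_le)
    rw [Measure.prod_prod, Measure.prod_prod, hcompl, zero_mul, mul_zero, add_zero]
  have key0 : ∀ X : Set (_ × _),
      (ν.prod ν) X = (ν.prod ν) (X ∩ (Sset m u ×ˢ Sset m u)) := by
    intro X
    refine le_antisymm ?_ (measure_mono Set.inter_subset_left)
    calc (ν.prod ν) X
        ≤ (ν.prod ν) ((X ∩ (Sset m u ×ˢ Sset m u)) ∪ (Sset m u ×ˢ Sset m u)ᶜ) := by
          refine measure_mono fun p hp => ?_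
          by_cases hps : p ∈ Sset m u ×ˢ Sset m u
          · exact Or.inl ⟨hp, hps⟩
          · exact Or.inr hps
      _ ≤ (ν.prod ν) (X ∩ (Sset m u ×ˢ Sset m u)) + (ν.prod ν) (Sset m u ×ˢ Sset m u)ᶜ :=
          measure_union_le _ _
      _ = (ν.prod ν) (X ∩ (Sset m u ×ˢ Sset m u)) := by rw [hSS_null, add_zero]
  have hmap : ∀ c' : Fin (m+1),
      (ν.prod ν).map (Prod.map (Rot m c') (Rot m c')) = ν.prod ν := by
    intro c'
    have hmeas : Measurable (Rot m c') := (Rot m c').continuous.measurable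
    rw [← Measure.map_prod_map _ _ hmeas hmeas]
    rw [hν, hc0def, rot_invariant m u c' (m:ℝ)]
  have hrot : ∀ r c' : Fin (m+1),
      (ν.prod ν) (Aev m (r + c')) = (ν.prod ν) (Aev m r) := by
    intro r c'
    have hmeas : Measurable (Rot m c') := (Rot m c').continuous.measurable
    have hΦmeas : Measurable (Prod.map (Rot m c') (Rot m c')) := hmeas.prodMap hmeas
    calc (ν.prod ν) (Aev m (r + c'))
        = (ν.prod ν) (Aev m (r + c') ∩ (Sset m u ×ˢ Sset m u)) := key0 _
      _ = (ν.prod ν) ((Prod.map (Rot m c') (Rot m c')) ⁻¹' (Aev m r)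
            ∩ (Sset m u ×ˢ Sset m u)) := by
          congr 1
          ext p
          simp only [Set.mem_inter_iff, Set.mem_preimage]
          constructor
          · rintro ⟨h1, h2⟩
            exact ⟨(rot_event m u c' r p h2).mpr h1, h2⟩
          · rintro ⟨h1, h2⟩
            exact ⟨(rot_event m u c' r p h2).mp h1, h2⟩
      _ = (ν.prod ν) ((Prod.map (Rot m c') (Rot m c')) ⁻¹' (Aev m r)) := (key0 _).symm
      _ = ((ν.prod ν).map (Prod.map (Rot m c') (Rot m c'))) (Aev m r) :=
          (Measure.map_apply hΦmeas (measurableSet_Aev m r)).symm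
      _ = (ν.prod ν) (Aev m r) := by rw [hmap c']
  have hallequal : ∀ r : Fin (m+1), (ν.prod ν) (Aev m r) = (ν.prod ν) (Aev m 0) := by
    intro r
    have := hrot 0 r
    rwa [zero_add] at this
  have hMnull : ∀ r s : Fin (m+1), r.val < s.val → (ν.prod ν) (Aev m r ∩ Aev m s) = 0 := by
    intro r s hrs
    set ℓ := winL m r.val (s.val - r.val) with hℓ
    have hℓcont : Continuous ℓ := ℓ.continuous_of_finiteDimensional
    have hMmeas : MeasurableSet {p : EuclideanSpace ℝ (Fin (m+1)) × EuclideanSpace ℝ (Fin (m+1)) |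
        ℓ p.1 = ℓ p.2} :=
      (isClosed_eq (hℓcont.comp continuous_fst) (hℓcont.comp continuous_snd)).measurableSet
    refine measure_mono_null (Aev_inter_subset m r s hrs) ?_
    rw [Measure.prod_apply hMmeas]
    have hzero : ∀ x, ν (Prod.mk x ⁻¹' {p : EuclideanSpace ℝ (Fin (m+1)) ×
        EuclideanSpace ℝ (Fin (m+1)) | ℓ p.1 = ℓ p.2}) = 0 := by
      intro x
      have heq : Prod.mk x ⁻¹' {p : EuclideanSpace ℝ (Fin (m+1)) ×
          EuclideanSpace ℝ (Fin (m+1)) | ℓ p.1 = ℓ p.2} = {y | ℓ y = ℓ x} := by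
        ext y; simp [eq_comm]
      rw [heq, hν_apply _ (isClosed_eq hℓcont continuous_const).measurableSet,
        null_section m hm u ℓ r s (winL_single_in m r s hrs) (winL_single_out m r s hrs) (ℓ x),
        mul_zero]
    simp only [hzero]
    simp
  have hdisj : Pairwise (Function.onFun (MeasureTheory.AEDisjoint (ν.prod ν)) (Aev m)) := by
    intro r s hrs
    rcases Nat.lt_trichotomy r.val s.val with h | h | h
    · exact hMnull r s h
    · exact absurd (Fin.ext h) hrs
    · have := hMnull s r h
      rwa [Set.inter_comm] at this
  have hcover : (⋃ r : Fin (m+1), Aev m r) = Set.univ :=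
    Set.eq_univ_iff_forall.mpr fun p => Set.mem_iUnion.mpr (exists_min_Aev m p)
  have huniv1 : (ν.prod ν) Set.univ = 1 := by
    rw [← Set.univ_prod_univ, Measure.prod_prod, hν_univ, one_mul]
  have hn1 : ((m+1 : ℕ) : ℝ≥0∞) * (ν.prod ν) (Aev m 0) = 1 := by
    rw [← huniv1, ← hcover,
      measure_iUnion₀ hdisj (fun r => (measurableSet_Aev m r).nullMeasurableSet),
      tsum_fintype, Finset.sum_congr rfl fun r _ => hallequal r, Finset.sum_const,
      Finset.card_univ, Fintype.card_fin, nsmul_eq_mul]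
  have hv : (ν.prod ν) (Aev m 0) = ((m+1 : ℕ) : ℝ≥0∞)⁻¹ := by
    have hN0 : ((m+1 : ℕ) : ℝ≥0∞) ≠ 0 := by
      simp
    have hNt : ((m+1 : ℕ) : ℝ≥0∞) ≠ ⊤ := ENNReal.natCast_ne_top _
    calc (ν.prod ν) (Aev m 0)
        = (((m+1 : ℕ) : ℝ≥0∞)⁻¹ * ((m+1 : ℕ) : ℝ≥0∞)) * (ν.prod ν) (Aev m 0) := by
          rw [ENNReal.inv_mul_cancel hN0 hNt, one_mul]
      _ = ((m+1 : ℕ) : ℝ≥0∞)⁻¹ * (((m+1 : ℕ) : ℝ≥0∞) * (ν.prod ν) (Aev m 0)) := by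
          rw [mul_assoc]
      _ = ((m+1 : ℕ) : ℝ≥0∞)⁻¹ := by rw [hn1, mul_one]
  have hEv : {p : EuclideanSpace ℝ (Fin (m+1)) × EuclideanSpace ℝ (Fin (m+1)) |
        stLE (fun j => p.1 j) (fun j => p.2 j)} ∩ (Sset m u ×ˢ Sset m u)
      = Aev m 0 ∩ (Sset m u ×ˢ Sset m u) := by
    ext p
    simp only [Set.mem_inter_iff, Set.mem_setOf_eq]
    constructor
    · rintro ⟨h1, h2⟩
      exact ⟨(stLE_iff m u p h2).mp h1, h2⟩
    · rintro ⟨h1, h2⟩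
      exact ⟨(stLE_iff m u p h2).mpr h1, h2⟩
  calc (ν.prod ν) {p | stLE (fun j => p.1 j) (fun j => p.2 j)}
      = (ν.prod ν) ({p | stLE (fun j => p.1 j) (fun j => p.2 j)}
          ∩ (Sset m u ×ˢ Sset m u)) := key0 _
    _ = (ν.prod ν) (Aev m 0 ∩ (Sset m u ×ˢ Sset m u)) := by rw [hEv]
    _ = (ν.prod ν) (Aev m 0) := (key0 _).symm
    _ = ((m+1 : ℕ) : ℝ≥0∞)⁻¹ := hv
end
end
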